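/- arXiv:1306.1402 — 5 statements merged into one kernel-verified Lean document; each statement's English description precedes it below -/
import Mathlib

section
/- Let G be a finite undirected connected simple bipartite graph with vertex bipartition V₁, V₂ and n vertices, and let t be any integer with t ≥ 4·ln(n)/μ. Then for every pair of vertices u, v: if u and v lie in different parts of the bipartition, |(P^t)_{u,v} − π(v)·(1+(−1)^{t+1})| ≤ n^{−3}; and if u and v lie in the same part of the bipartition, |(P^t)_{u,v} − π(v)·(1+(−1)^{t})| ≤ n^{−3}. -/
open Finset

/-- The random-walk transition matrix of a graph: `P u v = 1/deg(u)` if `u ~ v`, else `0`. -/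
noncomputable def transP {V : Type*} [Fintype V] [DecidableEq V] (G : SimpleGraph V)
    [DecidableRel G.Adj] : Matrix V V ℝ :=
  fun u v => if G.Adj u v then ((G.degree u : ℝ))⁻¹ else 0

/-- The stationary distribution `π(v) = deg(v) / (2|E|)`. -/
noncomputable def statPi {V : Type*} [Fintype V] [DecidableEq V] (G : SimpleGraph V)
    [DecidableRel G.Adj] (v : V) : ℝ :=
  (G.degree v : ℝ) / (2 * G.edgeFinset.card)

/-- The spectral gap parameter `μ = 1 - max{|λ| : λ eigenvalue of P, |λ| < 1}`. -/
noncomputable def specMu {V : Type*} [Fintype V] [DecidableEq V] (G : SimpleGraph V)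
    [DecidableRel G.Adj] : ℝ :=
  1 - sSup {r : ℝ | ∃ lam : ℝ,
      Module.End.HasEigenvalue (Matrix.mulVecLin (transP G)) lam ∧ |lam| < 1 ∧ r = |lam|}

section Aux

open RealInnerProductSpace

set_option linter.unusedSectionVars false

variable {V : Type*} [Fintype V] [DecidableEq V] (G : SimpleGraph V) [DecidableRel G.Adj]

/-! ### Spectral gap basic facts -/

def muSet : Set ℝ := {r : ℝ | ∃ lam : ℝ,
    Module.End.HasEigenvalue (Matrix.mulVecLin (transP G)) lam ∧ |lam| < 1 ∧ r = |lam|}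

lemma specMu_eq : specMu G = 1 - sSup (muSet G) := rfl

lemma muSet_finite : (muSet G).Finite := by
  have h : muSet G ⊆ (fun l => |l|) '' (spectrum ℝ (Matrix.mulVecLin (transP G))) := by
    rintro r ⟨lam, hlam, _, rfl⟩
    exact ⟨lam, hlam.mem_spectrum, rfl⟩
  exact ((Module.End.finite_spectrum _).image _).subset h

lemma muSet_bdd : BddAbove (muSet G) := (muSet_finite G).bddAbove

lemma sSup_muSet_nonneg : 0 ≤ sSup (muSet G) := by
  rcases Set.eq_empty_or_nonempty (muSet G) with h | ⟨r, hr⟩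
  · simp [h, Real.sSup_empty]
  · obtain ⟨lam, _, _, rfl⟩ := hr
    exact le_trans (abs_nonneg lam) (le_csSup (muSet_bdd G) ⟨lam, by tauto⟩)

lemma sSup_muSet_lt_one : sSup (muSet G) < 1 := by
  rcases Set.eq_empty_or_nonempty (muSet G) with h | h
  · simp [h, Real.sSup_empty]
  · obtain ⟨lam, _, hl1, heq⟩ := h.csSup_mem (muSet_finite G)
    rw [heq]; exact hl1

lemma specMu_pos : 0 < specMu G := by
  rw [specMu_eq]; linarith [sSup_muSet_lt_one G]

lemma specMu_le_one : specMu G ≤ 1 := by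
  rw [specMu_eq]; linarith [sSup_muSet_nonneg G]

lemma abs_eig_le {lam : ℝ} (h : Module.End.HasEigenvalue (Matrix.mulVecLin (transP G)) lam)
    (h1 : |lam| < 1) : |lam| ≤ 1 - specMu G := by
  rw [specMu_eq]
  have := le_csSup (muSet_bdd G) (show |lam| ∈ muSet G from ⟨lam, h, h1, rfl⟩)
  linarith

/-! ### Graph basics -/

lemma degree_pos (hconn : G.Connected) (hn : 2 ≤ Fintype.card V) (x : V) :
    0 < G.degree x := by
  obtain ⟨y, hy⟩ := Fintype.exists_ne_of_one_lt_card (by omega) x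
  obtain ⟨w⟩ := hconn.preconnected x y
  rw [G.degree_pos_iff_exists_adj]
  cases w with
  | nil => exact absurd rfl hy.symm
  | cons h p => exact ⟨_, h⟩

lemma row_sum (x : V) (hd : 0 < G.degree x) : ∑ y, transP G x y = 1 := by
  have h : ∑ y, transP G x y = ∑ y ∈ Finset.univ.filter (G.Adj x), ((G.degree x : ℝ))⁻¹ :=
    (Finset.sum_filter _ _).symm
  rw [h]
  have hf : Finset.univ.filter (G.Adj x) = G.neighborFinset x := by
    ext z; simp [SimpleGraph.mem_neighborFinset]
  rw [hf, Finset.sum_const, SimpleGraph.card_neighborFinset_eq_degree, nsmul_eq_mul]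
  field_simp

lemma sum_nbr (a : V) (g : V → ℝ) : ∑ z, transP G a z * g z
    = ∑ z ∈ G.neighborFinset a, (G.degree a : ℝ)⁻¹ * g z := by
  have hterm : ∀ z, transP G a z * g z
      = if z ∈ G.neighborFinset a then (G.degree a : ℝ)⁻¹ * g z else 0 := by
    intro z; by_cases h : G.Adj a z <;> simp [transP, h, SimpleGraph.mem_neighborFinset]
  simp_rw [hterm]
  rw [Finset.sum_ite_mem, Finset.univ_inter]

/-! ### Eigenvalue bound and maximum principle -/

lemma eig_abs_le_one (hdeg : ∀ x, 0 < G.degree x) {lam : ℝ} {g : V → ℝ} (hg : g ≠ 0)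
    (heq : (transP G).mulVec g = lam • g) : |lam| ≤ 1 := by
  obtain ⟨x₀, hx₀⟩ := Function.ne_iff.mp hg
  haveI : Nonempty V := ⟨x₀⟩
  obtain ⟨u, -, hu⟩ := Finset.exists_max_image Finset.univ (fun x => |g x|) ⟨x₀, Finset.mem_univ x₀⟩
  have hgu : 0 < |g u| := lt_of_lt_of_le (abs_pos.mpr hx₀) (hu x₀ (Finset.mem_univ x₀))
  have h1 : |lam| * |g u| ≤ |g u| := by
    have h2 : lam * g u = ∑ y, transP G u y * g y := by
      have := congrFun heq u
      simp [Matrix.mulVec, dotProduct, Pi.smul_apply] at this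
      linarith [this]
    calc |lam| * |g u| = |∑ y, transP G u y * g y| := by rw [← abs_mul, h2]
    _ ≤ ∑ y, |transP G u y * g y| := Finset.abs_sum_le_sum_abs _ _
    _ ≤ ∑ y, transP G u y * |g u| := by
        apply Finset.sum_le_sum
        intro y _
        rw [abs_mul]
        have hP : 0 ≤ transP G u y := by
          unfold transP; split <;> positivity
        rw [abs_of_nonneg hP]
        exact mul_le_mul_of_nonneg_left (hu y (Finset.mem_univ y)) hP
    _ = |g u| := by rw [← Finset.sum_mul, row_sum G u (hdeg u), one_mul]
  exact le_of_mul_le_mul_right (by linarith) hgu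

lemma harmonic_const (hconn : G.Connected) (hdeg : ∀ x, 0 < G.degree x) {g : V → ℝ}
    (heq : (transP G).mulVec g = g) : ∀ x y, g x = g y := by
  intro x y
  obtain ⟨u, -, hu⟩ := Finset.exists_max_image Finset.univ g ⟨x, Finset.mem_univ x⟩
  have step : ∀ a c, G.Adj a c → g a = g u → g c = g u := by
    intro a c hac ha
    by_contra hne
    have hcu : g c < g u := lt_of_le_of_ne (hu c (Finset.mem_univ c)) hne
    have h2 : ∑ z, transP G a z * g z = g a := by
      have := congrFun heq a
      simpa [Matrix.mulVec, dotProduct] using this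
    have h3 := sum_nbr G a g
    have h4 : ∑ z ∈ G.neighborFinset a, g z < ∑ z ∈ G.neighborFinset a, g u :=
      Finset.sum_lt_sum (fun i _ => hu i (Finset.mem_univ i))
        ⟨c, (G.mem_neighborFinset a c).mpr hac, hcu⟩
    have h5 : (∑ z ∈ G.neighborFinset a, g u) = (G.degree a : ℝ) * g u := by
      rw [Finset.sum_const, SimpleGraph.card_neighborFinset_eq_degree, nsmul_eq_mul]
    have hd : (0 : ℝ) < G.degree a := by exact_mod_cast hdeg a
    have hlt : g a < g u := by
      rw [← h2, h3, ← Finset.mul_sum]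
      calc (G.degree a : ℝ)⁻¹ * ∑ z ∈ G.neighborFinset a, g z
          < (G.degree a : ℝ)⁻¹ * ((G.degree a : ℝ) * g u) := by
            apply mul_lt_mul_of_pos_left _ (by positivity)
            rw [← h5]; exact h4
        _ = g u := by field_simp
    linarith [ha ▸ hlt]
  have prop : ∀ a b (w : G.Walk a b), g a = g u → g b = g u := by
    intro a b w
    induction w with
    | nil => exact id
    | cons h p ih => intro ha; exact ih (step _ _ h ha)
  have hx := prop u x ((hconn.preconnected u x).some) rfl
  have hy := prop u y ((hconn.preconnected u y).some) rfl
  rw [hx, hy]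

/-! ### The symmetrized matrix -/

noncomputable def symS : Matrix V V ℝ :=
  fun x y => if G.Adj x y then (Real.sqrt (G.degree x) * Real.sqrt (G.degree y))⁻¹ else 0

lemma symS_herm : (symS G).IsHermitian := by
  ext x y
  simp only [symS, Matrix.conjTranspose_apply, star_trivial]
  by_cases h : G.Adj x y
  · rw [if_pos h, if_pos h.symm, mul_comm]
  · rw [if_neg h, if_neg (fun h' => h h'.symm)]

noncomputable def opT : EuclideanSpace ℝ V →ₗ[ℝ] EuclideanSpace ℝ V :=
  Matrix.toEuclideanLin (symS G)

lemma opT_symm : (opT G).IsSymmetric :=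
  (Matrix.isHermitian_iff_isSymmetric).mp (symS_herm G)

lemma opT_apply (f : EuclideanSpace ℝ V) (x : V) : opT G f x = ∑ y, symS G x y * f y := by
  simp [opT, Matrix.toEuclideanLin_apply, Matrix.mulVec, dotProduct]

lemma inner_eq (a b : EuclideanSpace ℝ V) : ⟪a, b⟫ = ∑ x, a x * b x := by
  simp [PiLp.inner_apply, RCLike.inner_apply, mul_comm]

/-! ### The eigenvectors for eigenvalues 1 and -1 -/

noncomputable def wP : EuclideanSpace ℝ V :=
  (WithLp.equiv 2 (V → ℝ)).symm fun x => Real.sqrt (G.degree x)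

noncomputable def wM (σ : V → ℝ) : EuclideanSpace ℝ V :=
  (WithLp.equiv 2 (V → ℝ)).symm fun x => σ x * Real.sqrt (G.degree x)

lemma wP_apply (x : V) : wP G x = Real.sqrt (G.degree x) := rfl

lemma wM_apply (σ : V → ℝ) (x : V) : wM G σ x = σ x * Real.sqrt (G.degree x) := rfl

lemma symS_mul (hdeg : ∀ x, 0 < G.degree x) (x y : V) (a : ℝ) :
    symS G x y * (a * Real.sqrt (G.degree y))
      = if G.Adj x y then a * (Real.sqrt (G.degree x))⁻¹ else 0 := by
  have hy : (0:ℝ) < Real.sqrt (G.degree y) := Real.sqrt_pos.mpr (by exact_mod_cast hdeg y)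
  unfold symS
  split_ifs with h
  · have h2 : (Real.sqrt (G.degree x) * Real.sqrt (G.degree y))⁻¹ * (a * Real.sqrt (G.degree y))
        = a * (Real.sqrt (G.degree y) * (Real.sqrt (G.degree y))⁻¹) * (Real.sqrt (G.degree x))⁻¹ := by
      rw [mul_inv]; ring
    rw [h2, mul_inv_cancel₀ hy.ne', mul_one]
  · ring

lemma opT_wP (hdeg : ∀ x, 0 < G.degree x) : opT G (wP G) = wP G := by
  ext x
  rw [opT_apply]
  have : ∀ y, symS G x y * wP G y = if G.Adj x y then (Real.sqrt (G.degree x))⁻¹ else 0 := by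
    intro y
    rw [wP_apply]
    have := symS_mul G hdeg x y 1
    rw [one_mul] at this
    rw [this, one_mul]
  simp_rw [this]
  rw [← Finset.sum_filter]
  have hf : Finset.univ.filter (G.Adj x) = G.neighborFinset x := by
    ext z; simp [SimpleGraph.mem_neighborFinset]
  rw [hf, Finset.sum_const, SimpleGraph.card_neighborFinset_eq_degree, nsmul_eq_mul, wP_apply]
  have hx : (0:ℝ) < (G.degree x : ℝ) := by exact_mod_cast hdeg x
  have hsx : (0:ℝ) < Real.sqrt (G.degree x) := Real.sqrt_pos.mpr hx
  have hsq : Real.sqrt (G.degree x) * Real.sqrt (G.degree x) = (G.degree x : ℝ) :=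
    Real.mul_self_sqrt hx.le
  rw [mul_inv_eq_iff_eq_mul₀ hsx.ne']
  exact hsq.symm

lemma opT_wM (hdeg : ∀ x, 0 < G.degree x) (σ : V → ℝ)
    (hσadj : ∀ x y, G.Adj x y → σ y = -σ x) : opT G (wM G σ) = -(wM G σ) := by
  ext x
  rw [PiLp.neg_apply, opT_apply]
  have : ∀ y, symS G x y * wM G σ y = if G.Adj x y then -σ x * (Real.sqrt (G.degree x))⁻¹ else 0 := by
    intro y
    rw [wM_apply]
    rw [symS_mul G hdeg x y (σ y)]
    split_ifs with h
    · rw [hσadj x y h]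
    · rfl
  simp_rw [this]
  rw [← Finset.sum_filter]
  have hf : Finset.univ.filter (G.Adj x) = G.neighborFinset x := by
    ext z; simp [SimpleGraph.mem_neighborFinset]
  rw [hf, Finset.sum_const, SimpleGraph.card_neighborFinset_eq_degree, nsmul_eq_mul, wM_apply]
  have hx : (0:ℝ) < (G.degree x : ℝ) := by exact_mod_cast hdeg x
  have hsq : Real.sqrt (G.degree x) * Real.sqrt (G.degree x) = (G.degree x : ℝ) :=
    Real.mul_self_sqrt hx.le
  have hsx : (0:ℝ) < Real.sqrt (G.degree x) := Real.sqrt_pos.mpr hx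
  have h6 : (G.degree x : ℝ) * (Real.sqrt (G.degree x))⁻¹ = Real.sqrt (G.degree x) := by
    rw [mul_inv_eq_iff_eq_mul₀ hsx.ne']
    exact hsq.symm
  calc (G.degree x : ℝ) * (-σ x * (Real.sqrt (G.degree x))⁻¹)
      = -σ x * ((G.degree x : ℝ) * (Real.sqrt (G.degree x))⁻¹) := by ring
    _ = -(σ x * Real.sqrt (G.degree x)) := by rw [h6]; ring

lemma inner_wP_wP : ⟪wP G, wP G⟫ = 2 * (G.edgeFinset.card : ℝ) := by
  rw [inner_eq]
  have : ∀ x, wP G x * wP G x = (G.degree x : ℝ) := fun x =>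
    Real.mul_self_sqrt (by positivity)
  simp_rw [this]
  rw [← Nat.cast_sum]
  rw [SimpleGraph.sum_degrees_eq_twice_card_edges]
  push_cast
  ring

lemma inner_wM_wM (σ : V → ℝ) (hσsq : ∀ x, σ x * σ x = 1) :
    ⟪wM G σ, wM G σ⟫ = 2 * (G.edgeFinset.card : ℝ) := by
  rw [inner_eq]
  have : ∀ x, wM G σ x * wM G σ x = (G.degree x : ℝ) := by
    intro x
    rw [wM_apply]
    have hms := Real.mul_self_sqrt (show (0:ℝ) ≤ (G.degree x : ℝ) by positivity)
    have h2 : σ x * Real.sqrt (G.degree x) * (σ x * Real.sqrt (G.degree x))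
        = (σ x * σ x) * (Real.sqrt (G.degree x) * Real.sqrt (G.degree x)) := by ring
    rw [h2, hσsq x, hms, one_mul]
  simp_rw [this]
  rw [← Nat.cast_sum, SimpleGraph.sum_degrees_eq_twice_card_edges]
  push_cast
  ring

lemma sum_sigma_deg (σ : V → ℝ) (hσadj : ∀ x y, G.Adj x y → σ y = -σ x) :
    ∑ x, σ x * (G.degree x : ℝ) = 0 := by
  have h1 : ∀ (τ : V → ℝ) (x : V), ∑ y, (if G.Adj x y then τ x else 0) = τ x * (G.degree x : ℝ) := by
    intro τ x
    rw [← Finset.sum_filter]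
    have hf : Finset.univ.filter (G.Adj x) = G.neighborFinset x := by
      ext z; simp [SimpleGraph.mem_neighborFinset]
    rw [hf, Finset.sum_const, SimpleGraph.card_neighborFinset_eq_degree, nsmul_eq_mul, mul_comm]
  have h2 : ∑ x, σ x * (G.degree x : ℝ) = ∑ y, ∑ x, (if G.Adj x y then σ x else 0) := by
    rw [← Finset.sum_comm]
    exact Finset.sum_congr rfl fun x _ => (h1 σ x).symm
  have h3 : ∀ y, ∑ x, (if G.Adj x y then σ x else 0) = -(σ y * (G.degree y : ℝ)) := by
    intro y
    have : ∀ x, (if G.Adj x y then σ x else 0) = (if G.Adj y x then (-σ) y else 0) := by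
      intro x
      by_cases h : G.Adj x y
      · rw [if_pos h, if_pos h.symm]
        have := hσadj x y h
        simp only [Pi.neg_apply]
        linarith
      · rw [if_neg h, if_neg (fun h' => h h'.symm)]
    simp_rw [this]
    rw [h1 (-σ) y]
    simp only [Pi.neg_apply]
    ring
  simp_rw [h3] at h2
  rw [Finset.sum_neg_distrib] at h2
  linarith

lemma inner_wP_wM (σ : V → ℝ) (hσadj : ∀ x y, G.Adj x y → σ y = -σ x) :
    ⟪wP G, wM G σ⟫ = 0 := by
  rw [inner_eq]
  have : ∀ x, wP G x * wM G σ x = σ x * (G.degree x : ℝ) := by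
    intro x
    rw [wP_apply, wM_apply]
    have hms := Real.mul_self_sqrt (show (0:ℝ) ≤ (G.degree x : ℝ) by positivity)
    have h2 : Real.sqrt (G.degree x) * (σ x * Real.sqrt (G.degree x))
        = σ x * (Real.sqrt (G.degree x) * Real.sqrt (G.degree x)) := by ring
    rw [h2, hms]
  simp_rw [this]
  exact sum_sigma_deg G σ hσadj

/-! ### Transfer between P and S -/

lemma trans_step (hdeg : ∀ x, 0 < G.degree x) (f : EuclideanSpace ℝ V) (x : V) :
    (transP G).mulVec (fun y => (Real.sqrt (G.degree y))⁻¹ * f y) x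
      = (Real.sqrt (G.degree x))⁻¹ * opT G f x := by
  rw [opT_apply, Finset.mul_sum]
  simp only [Matrix.mulVec, dotProduct]
  refine Finset.sum_congr rfl fun y _ => ?_
  have hx : (0:ℝ) < (G.degree x : ℝ) := by exact_mod_cast hdeg x
  have hy : (0:ℝ) < (G.degree y : ℝ) := by exact_mod_cast hdeg y
  have hsx : (0:ℝ) < Real.sqrt (G.degree x) := Real.sqrt_pos.mpr hx
  have hsy : (0:ℝ) < Real.sqrt (G.degree y) := Real.sqrt_pos.mpr hy
  have hmx : Real.sqrt (G.degree x) * Real.sqrt (G.degree x) = (G.degree x : ℝ) :=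
    Real.mul_self_sqrt hx.le
  have h7 : ((G.degree x : ℝ))⁻¹ = (Real.sqrt (G.degree x))⁻¹ * (Real.sqrt (G.degree x))⁻¹ := by
    rw [← mul_inv, hmx]
  unfold transP symS
  split_ifs with h
  · rw [h7, mul_inv]
    ring
  · ring

/-! ### Eigenspace uniqueness -/

lemma eig_one_span [Nonempty V] (hconn : G.Connected) (hdeg : ∀ x, 0 < G.degree x)
    {f : EuclideanSpace ℝ V} (hf : opT G f = f) :
    ∃ c : ℝ, ∀ x, f x = c * Real.sqrt (G.degree x) := by
  set g : V → ℝ := fun x => (Real.sqrt (G.degree x))⁻¹ * f x with hg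
  have hPg : (transP G).mulVec g = g := by
    funext x
    have := trans_step G hdeg f x
    rw [hf] at this
    exact this
  have hconst := harmonic_const G hconn hdeg hPg
  refine ⟨g (Classical.arbitrary V), fun x => ?_⟩
  have hsx : (0:ℝ) < Real.sqrt (G.degree x) :=
    Real.sqrt_pos.mpr (by exact_mod_cast hdeg x)
  have h1 : g x = g (Classical.arbitrary V) := hconst x _
  have h3 : f x = Real.sqrt (G.degree x) * g x := by
    simp only [hg]
    rw [← mul_assoc, mul_inv_cancel₀ hsx.ne', one_mul]
  rw [h3, h1]; ring

lemma eig_neg_one_span [Nonempty V] (hconn : G.Connected) (hdeg : ∀ x, 0 < G.degree x)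
    (σ : V → ℝ) (hσsq : ∀ x, σ x * σ x = 1) (hσadj : ∀ x y, G.Adj x y → σ y = -σ x)
    {f : EuclideanSpace ℝ V} (hf : opT G f = -f) :
    ∃ c : ℝ, ∀ x, f x = c * (σ x * Real.sqrt (G.degree x)) := by
  set g : V → ℝ := fun x => (Real.sqrt (G.degree x))⁻¹ * f x with hgdef
  have hPg : ∀ x, (transP G).mulVec g x = -g x := by
    intro x
    have := trans_step G hdeg f x
    rw [hf] at this
    simpa using this
  set h : V → ℝ := fun x => σ x * g x with hhdef
  have hPh : (transP G).mulVec h = h := by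
    funext x
    have hterm : ∀ y, transP G x y * h y = (-σ x) * (transP G x y * g y) := by
      intro y
      by_cases hadj : G.Adj x y
      · have hxy := hσadj x y hadj
        simp only [hhdef]
        rw [hxy]; ring
      · have h0 : transP G x y = 0 := by simp [transP, hadj]
        rw [h0]; ring
    simp only [Matrix.mulVec, dotProduct] at hPg ⊢
    calc ∑ y, transP G x y * h y = ∑ y, (-σ x) * (transP G x y * g y) :=
          Finset.sum_congr rfl fun y _ => hterm y
      _ = (-σ x) * ∑ y, transP G x y * g y := by rw [Finset.mul_sum]
      _ = (-σ x) * (-g x) := by rw [hPg x]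
      _ = h x := by simp only [hhdef]; ring
  have hconst := harmonic_const G hconn hdeg hPh
  refine ⟨h (Classical.arbitrary V), fun x => ?_⟩
  have hsx : (0:ℝ) < Real.sqrt (G.degree x) :=
    Real.sqrt_pos.mpr (by exact_mod_cast hdeg x)
  have h1 : h x = h (Classical.arbitrary V) := hconst x _
  have h2 : g x = σ x * h x := by
    simp only [hhdef]
    rw [← mul_assoc, hσsq x, one_mul]
  have h3 : f x = Real.sqrt (G.degree x) * g x := by
    simp only [hgdef]
    rw [← mul_assoc, mul_inv_cancel₀ hsx.ne', one_mul]
  rw [h3, h2, h1]; ring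

/-! ### Component bound and numeric endgame -/

lemma abs_apply_le_norm (z : EuclideanSpace ℝ V) (x : V) : |z x| ≤ ‖z‖ := by
  rw [EuclideanSpace.norm_eq, ← Real.sqrt_sq_eq_abs]
  apply Real.sqrt_le_sqrt
  have : |z x| ^ 2 ≤ ∑ i, ‖z i‖ ^ 2 := by
    have h := Finset.single_le_sum (f := fun i => ‖z i‖^2) (fun i _ => by positivity)
      (Finset.mem_univ x)
    simpa [Real.norm_eq_abs, sq_abs] using h
  simpa [sq_abs] using this

lemma endgame (n : ℝ) (hn : 2 ≤ n) (μR : ℝ) (hμ : 0 < μR) (hμ1 : μR ≤ 1) (t : ℕ)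
    (ht : 4 * Real.log n / μR ≤ (t : ℝ)) :
    Real.sqrt n * (1 - μR) ^ t ≤ n ^ (-3 : ℤ) := by
  have hn0 : 0 < n := by linarith
  have h1 : 4 * Real.log n ≤ t * μR := by
    rw [div_le_iff₀ hμ] at ht; linarith
  have h2 : (1 - μR) ^ t ≤ Real.exp (-μR) ^ t :=
    pow_le_pow_left₀ (by linarith) (by linarith [Real.add_one_le_exp (-μR)]) t
  have h3 : Real.exp (-μR) ^ t = Real.exp (-((t : ℝ) * μR)) := by
    rw [← Real.exp_nat_mul]; ring_nf
  have h4 : Real.exp (-((t:ℝ) * μR)) ≤ Real.exp (-(4 * Real.log n)) :=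
    Real.exp_le_exp.mpr (by linarith)
  have h5 : Real.exp (-(4 * Real.log n)) = n ^ (-4 : ℝ) := by
    rw [Real.rpow_def_of_pos hn0]; ring_nf
  have h6 : (1 - μR) ^ t ≤ n ^ (-4 : ℝ) := by
    rw [← h5]; exact le_trans h2 (le_trans (le_of_eq h3) h4)
  calc Real.sqrt n * (1 - μR) ^ t ≤ n ^ (1/2 : ℝ) * n ^ (-4 : ℝ) := by
        rw [← Real.sqrt_eq_rpow]
        exact mul_le_mul_of_nonneg_left h6 (Real.sqrt_nonneg n)
    _ = n ^ (1/2 + -4 : ℝ) := (Real.rpow_add hn0 _ _).symm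
    _ ≤ n ^ ((-3 : ℤ) : ℝ) := Real.rpow_le_rpow_of_exponent_le (by linarith) (by norm_num)
    _ = n ^ (-3 : ℤ) := Real.rpow_intCast n (-3)

lemma trans_pow (hdeg : ∀ x, 0 < G.degree x) : ∀ (s : ℕ) (f : EuclideanSpace ℝ V) (x : V),
    (transP G ^ s).mulVec (fun y => (Real.sqrt (G.degree y))⁻¹ * f y) x
      = (Real.sqrt (G.degree x))⁻¹ * ((opT G ^ s) f) x := by
  intro s
  induction s with
  | zero => intro f x; simp [Matrix.one_mulVec]
  | succ s ih =>
    intro f x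
    rw [pow_succ, ← Matrix.mulVec_mulVec]
    have hstep : (transP G).mulVec (fun y => (Real.sqrt (G.degree y))⁻¹ * f y)
        = fun y => (Real.sqrt (G.degree y))⁻¹ * (opT G f) y :=
      funext fun z => trans_step G hdeg f z
    rw [hstep, ih (opT G f) x, pow_succ, Module.End.mul_apply]

/-! ### The key mixing estimate -/

set_option maxHeartbeats 2000000 in
lemma key (hconn : G.Connected) (hn : 2 ≤ Fintype.card V)
    (σ : V → ℝ) (hσsq : ∀ x, σ x * σ x = 1) (hσadj : ∀ x y, G.Adj x y → σ y = -σ x)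
    (t : ℕ) (ht : 4 * Real.log (Fintype.card V) / specMu G ≤ (t : ℝ)) (u v : V) :
    |(transP G ^ t) u v - statPi G v * (1 + (-1 : ℝ) ^ t * (σ u * σ v))| ≤
      (Fintype.card V : ℝ) ^ (-3 : ℤ) := by
  classical
  haveI hne : Nonempty V := Fintype.card_pos_iff.mp (by omega)
  have hdeg := degree_pos G hconn hn
  have hμpos : 0 < specMu G := specMu_pos G
  have hμle : specMu G ≤ 1 := specMu_le_one G
  set μ : ℝ := specMu G with hμdef
  set m : ℝ := (G.edgeFinset.card : ℝ) with hmdef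
  have h2m : (2 : ℝ) * m = ∑ x, (G.degree x : ℝ) := by
    rw [hmdef]
    exact_mod_cast (SimpleGraph.sum_degrees_eq_twice_card_edges G).symm
  have hm : 0 < m := by
    have hpos : (0:ℝ) < ∑ x, (G.degree x : ℝ) :=
      Finset.sum_pos (fun x _ => by exact_mod_cast hdeg x) ⟨u, Finset.mem_univ u⟩
    linarith
  set T := opT G with hTdef
  set wp := wP G with hwpdef
  set wm := wM G σ with hwmdef
  have hTwp : T wp = wp := opT_wP G hdeg
  have hTwm : T wm = -wm := opT_wM G hdeg σ hσadj
  have hpp : ⟪wp, wp⟫ = 2 * m := inner_wP_wP G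
  have hmmi : ⟪wm, wm⟫ = 2 * m := inner_wM_wM G σ hσsq
  have hpm : ⟪wp, wm⟫ = 0 := inner_wP_wM G σ hσadj
  have hsym : T.IsSymmetric := opT_symm G
  -- the invariant subspace orthogonal to both eigenvectors
  set K : Submodule ℝ (EuclideanSpace ℝ V) :=
    (Submodule.span ℝ {wp})ᗮ ⊓ (Submodule.span ℝ {wm})ᗮ with hKdef
  have hKmem : ∀ x : EuclideanSpace ℝ V, x ∈ K ↔ ⟪wp, x⟫ = 0 ∧ ⟪wm, x⟫ = 0 := by
    intro x
    rw [hKdef, Submodule.mem_inf, Submodule.mem_orthogonal_singleton_iff_inner_right,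
      Submodule.mem_orthogonal_singleton_iff_inner_right]
  have hKinv : ∀ x ∈ K, T x ∈ K := by
    intro x hx
    rw [hKmem] at hx ⊢
    refine ⟨?_, ?_⟩
    · rw [← hsym wp x, hTwp]; exact hx.1
    · rw [← hsym wm x, hTwm, inner_neg_left, hx.2, neg_zero]
  set T' : ↥K →ₗ[ℝ] ↥K := T.restrict hKinv with hT'def
  have hT'coe : ∀ y : ↥K, ((T' y : EuclideanSpace ℝ V)) = T (y : EuclideanSpace ℝ V) :=
    fun y => LinearMap.restrict_coe_apply _ _ _
  have hT'sym : T'.IsSymmetric := by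
    intro a b
    rw [Submodule.coe_inner, Submodule.coe_inner, hT'coe, hT'coe]
    exact hsym _ _
  set N := Module.finrank ℝ ↥K with hNdef
  set b := hT'sym.eigenvectorBasis (hNdef.symm) with hbdef
  set ev := hT'sym.eigenvalues (hNdef.symm) with hevdef
  have hev_vec : ∀ i, T' (b i) = ev i • b i := fun i =>
    hT'sym.apply_eigenvectorBasis (hNdef.symm) i
  -- all eigenvalues on K are at most 1 - μ in absolute value
  have hev : ∀ i, |ev i| ≤ 1 - μ := by
    intro i
    set f : EuclideanSpace ℝ V := (b i : EuclideanSpace ℝ V) with hfdef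
    have hbK := (b i).2
    rw [hKmem] at hbK
    have hf0 : f ≠ 0 := by
      rw [hfdef, ne_eq, Submodule.coe_eq_zero]
      have := b.toBasis.ne_zero i
      simpa using this
    have hTf : T f = ev i • f := by
      rw [hfdef, ← hT'coe, hev_vec]
      rfl
    set g : V → ℝ := fun x => (Real.sqrt (G.degree x))⁻¹ * f x with hgdef
    have hg0 : g ≠ 0 := by
      intro h0
      apply hf0
      ext x
      have hx := congrFun h0 x
      have hsx : (0:ℝ) < Real.sqrt (G.degree x) :=
        Real.sqrt_pos.mpr (by exact_mod_cast hdeg x)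
      simp only [hgdef, Pi.zero_apply] at hx
      have : f x = 0 := by
        rcases mul_eq_zero.mp hx with h | h
        · exact absurd h (by positivity)
        · exact h
      simpa using this
    have hPg : (transP G).mulVec g = ev i • g := by
      funext x
      have hts := trans_step G hdeg f x
      rw [hTf] at hts
      simp only [hgdef] at hts ⊢
      rw [hts]
      simp only [Pi.smul_apply, PiLp.smul_apply, smul_eq_mul]
      ring
    have habs1 : |ev i| ≤ 1 := eig_abs_le_one G hdeg hg0 hPg
    have hne1 : ev i ≠ 1 := by
      intro h1
      rw [h1, one_smul] at hTf
      obtain ⟨c, hc⟩ := eig_one_span G hconn hdeg hTf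
      have hinner : ⟪wp, f⟫ = c * (2 * m) := by
        rw [inner_eq]
        have : ∀ x, wp x * f x = c * (G.degree x : ℝ) := by
          intro x
          rw [hwpdef, wP_apply, hc x]
          have hms := Real.mul_self_sqrt (show (0:ℝ) ≤ (G.degree x :ℝ) by positivity)
          have h2 : Real.sqrt (G.degree x) * (c * Real.sqrt (G.degree x))
              = c * (Real.sqrt (G.degree x) * Real.sqrt (G.degree x)) := by ring
          rw [h2, hms]
        simp_rw [this]
        rw [← Finset.mul_sum, ← h2m]
      rw [hbK.1] at hinner
      have hc0 : c = 0 := by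
        rcases mul_eq_zero.mp hinner.symm with h | h
        · exact h
        · linarith
      apply hf0
      ext x
      rw [hc x, hc0, zero_mul]
      rfl
    have hnem1 : ev i ≠ -1 := by
      intro h1
      rw [h1] at hTf
      have hTf' : T f = -f := by rw [hTf, neg_one_smul]
      obtain ⟨c, hc⟩ := eig_neg_one_span G hconn hdeg σ hσsq hσadj hTf'
      have hinner : ⟪wm, f⟫ = c * (2 * m) := by
        rw [inner_eq]
        have : ∀ x, wm x * f x = c * (G.degree x : ℝ) := by
          intro x
          rw [hwmdef, wM_apply, hc x]
          have hms := Real.mul_self_sqrt (show (0:ℝ) ≤ (G.degree x :ℝ) by positivity)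
          have h2 : σ x * Real.sqrt (G.degree x) * (c * (σ x * Real.sqrt (G.degree x)))
              = c * ((σ x * σ x) * (Real.sqrt (G.degree x) * Real.sqrt (G.degree x))) := by ring
          rw [h2, hσsq x, hms, one_mul]
        simp_rw [this]
        rw [← Finset.mul_sum, ← h2m]
      rw [hbK.2] at hinner
      have hc0 : c = 0 := by
        rcases mul_eq_zero.mp hinner.symm with h | h
        · exact h
        · linarith
      apply hf0
      ext x
      rw [hc x, hc0, zero_mul]
      rfl
    have hlt : |ev i| < 1 := by
      rcases lt_or_eq_of_le habs1 with h | h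
      · exact h
      · exfalso
        rcases abs_eq (by norm_num : (0:ℝ) ≤ 1) |>.mp h with h1 | h1
        · exact hne1 h1
        · exact hnem1 h1
    have heig : Module.End.HasEigenvalue (Matrix.mulVecLin (transP G)) (ev i) := by
      apply Module.End.hasEigenvalue_of_hasEigenvector (x := g)
      refine ⟨Module.End.mem_eigenspace_iff.mpr ?_, hg0⟩
      rw [Matrix.mulVecLin_apply, hPg]
    exact abs_eig_le G heig hlt
  -- operator norm bound on K
  have h1μ : (0:ℝ) ≤ 1 - μ := by linarith
  have hTKnorm : ∀ y : ↥K, ‖T' y‖ ≤ (1 - μ) * ‖y‖ := by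
    intro y
    have hrepr : ∀ i, b.repr (T' y) i = ev i * b.repr y i := by
      intro i
      rw [b.repr_apply_apply, b.repr_apply_apply, ← hT'sym (b i) y, hev_vec]
      exact real_inner_smul_left (b i) y (ev i)
    have hsq1 : ‖T' y‖ ^ 2 = ∑ i, (b.repr (T' y) i) ^ 2 := by
      rw [← b.repr.norm_map (T' y), EuclideanSpace.norm_eq, Real.sq_sqrt (by positivity)]
      simp [Real.norm_eq_abs, sq_abs]
    have hsq2 : ‖y‖ ^ 2 = ∑ i, (b.repr y i) ^ 2 := by
      rw [← b.repr.norm_map y, EuclideanSpace.norm_eq, Real.sq_sqrt (by positivity)]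
      simp [Real.norm_eq_abs, sq_abs]
    have hle : ‖T' y‖ ^ 2 ≤ ((1 - μ) * ‖y‖) ^ 2 := by
      rw [hsq1, mul_pow, hsq2, Finset.mul_sum]
      apply Finset.sum_le_sum
      intro i _
      rw [hrepr i, mul_pow]
      apply mul_le_mul_of_nonneg_right _ (by positivity)
      have := hev i
      rw [← sq_abs (ev i)]
      apply pow_le_pow_left₀ (abs_nonneg _) this
    exact le_of_pow_le_pow_left₀ two_ne_zero (by positivity) hle
  -- iterate
  have hIter : ∀ (s : ℕ) (x : EuclideanSpace ℝ V), x ∈ K →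
      (T ^ s) x ∈ K ∧ ‖(T ^ s) x‖ ≤ (1 - μ) ^ s * ‖x‖ := by
    intro s
    induction s with
    | zero =>
      intro x hx
      rw [pow_zero]
      exact ⟨by simpa [Module.End.one_apply] using hx, by simp [Module.End.one_apply]⟩
    | succ s ih =>
      intro x hx
      have hx' : T x ∈ K := hKinv x hx
      have hTx : ‖T x‖ ≤ (1 - μ) * ‖x‖ := by
        have h := hTKnorm ⟨x, hx⟩
        have e1 : ‖T' ⟨x, hx⟩‖ = ‖T x‖ := by
          rw [← hT'coe ⟨x, hx⟩]
          rfl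
        have e2 : ‖(⟨x, hx⟩ : ↥K)‖ = ‖x‖ := rfl
        rw [e1, e2] at h
        exact h
      obtain ⟨ih1, ih2⟩ := ih (T x) hx'
      rw [pow_succ T s, Module.End.mul_apply]
      refine ⟨ih1, ?_⟩
      calc ‖(T ^ s) (T x)‖ ≤ (1 - μ) ^ s * ‖T x‖ := ih2
        _ ≤ (1 - μ) ^ s * ((1 - μ) * ‖x‖) :=
            mul_le_mul_of_nonneg_left hTx (by positivity)
        _ = (1 - μ) ^ (s + 1) * ‖x‖ := by ring
  -- powers on eigenvectors
  have hwp_pow : ∀ s : ℕ, (T ^ s) wp = wp := by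
    intro s
    induction s with
    | zero => simp
    | succ s ih => rw [pow_succ, Module.End.mul_apply, hTwp, ih]
  have hwm_pow : ∀ s : ℕ, (T ^ s) wm = ((-1:ℝ) ^ s) • wm := by
    intro s
    induction s with
    | zero => simp
    | succ s ih =>
      rw [pow_succ, Module.End.mul_apply, hTwm, map_neg, ih, pow_succ]
      rw [← neg_smul]
      ring_nf
  -- decompose the delta at v
  set ev1 : EuclideanSpace ℝ V := EuclideanSpace.single v 1 with hev1def
  set sv : ℝ := Real.sqrt (G.degree v) with hsvdef
  set su : ℝ := Real.sqrt (G.degree u) with hsudef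
  have hsv : 0 < sv := Real.sqrt_pos.mpr (by exact_mod_cast hdeg v)
  have hsu : 0 < su := Real.sqrt_pos.mpr (by exact_mod_cast hdeg u)
  set cP : ℝ := sv / (2 * m) with hcPdef
  set cM : ℝ := σ v * sv / (2 * m) with hcMdef
  set r : EuclideanSpace ℝ V := ev1 - cP • wp - cM • wm with hrdef
  have hinner_p : ⟪wp, ev1⟫ = sv := by
    rw [hev1def, EuclideanSpace.inner_single_right]
    simp [hwpdef, wP_apply, hsvdef]
  have hinner_m : ⟪wm, ev1⟫ = σ v * sv := by
    rw [hev1def, EuclideanSpace.inner_single_right]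
    simp [hwmdef, wM_apply, hsvdef]
  have h2m0 : (2 * m) ≠ 0 := (mul_pos two_pos hm).ne'
  have hrK : r ∈ K := by
    rw [hKmem, hrdef]
    constructor
    · rw [inner_sub_right, inner_sub_right, real_inner_smul_right, real_inner_smul_right,
        hinner_p, hpp, hpm, hcPdef, div_mul_cancel₀ _ h2m0, mul_zero]
      ring
    · rw [inner_sub_right, inner_sub_right, real_inner_smul_right, real_inner_smul_right,
        hinner_m, real_inner_comm wp wm, hpm, hmmi, hcMdef, div_mul_cancel₀ _ h2m0, mul_zero]
      ring
  have hrnorm : ‖r‖ ≤ 1 := by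
    set p : EuclideanSpace ℝ V := cP • wp + cM • wm with hpdef
    have hrp : ⟪r, p⟫ = 0 := by
      have hrmem := hrK
      rw [hKmem] at hrmem
      rw [hpdef, inner_add_right, real_inner_smul_right, real_inner_smul_right,
        real_inner_comm wp r, real_inner_comm wm r, hrmem.1, hrmem.2]
      ring
    have hsum : ev1 = r + p := by
      rw [hrdef, hpdef]
      abel
    have hnorm1 : ‖ev1‖ = 1 := by
      rw [hev1def, EuclideanSpace.norm_single, norm_one]
    have hexp : ‖ev1‖ ^ 2 = ‖r‖ ^ 2 + 2 * ⟪r, p⟫ + ‖p‖ ^ 2 := by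
      rw [hsum]; exact norm_add_sq_real r p
    rw [hnorm1, hrp] at hexp
    nlinarith [norm_nonneg r, norm_nonneg p, sq_nonneg (‖p‖)]
  have hdecompv : ev1 = cP • wp + cM • wm + r := by
    rw [hrdef]; abel
  have hTt : (T ^ t) ev1 = cP • wp + ((-1:ℝ) ^ t * cM) • wm + (T ^ t) r := by
    rw [hdecompv, map_add, map_add, map_smul, map_smul, hwp_pow, hwm_pow, smul_smul,
      mul_comm cM ((-1:ℝ)^t)]
  -- entry formula for P^t
  have hentry : (transP G ^ t) u v = su⁻¹ * (sv * ((T ^ t) ev1 u)) := by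
    have hA : (transP G ^ t) u v = (transP G ^ t).mulVec (Pi.single v 1) u := by
      rw [Matrix.mulVec_single]
      simp
    have hfun : (Pi.single v (1:ℝ)) = fun y => (Real.sqrt (G.degree y))⁻¹ * ((sv • ev1) y) := by
      funext y
      simp only [PiLp.smul_apply, smul_eq_mul, hev1def, EuclideanSpace.single_apply]
      by_cases h : y = v
      · subst h
        simp [Pi.single_apply, hsvdef]
        rw [inv_mul_cancel₀]
        exact (Real.sqrt_pos.mpr (by exact_mod_cast hdeg y)).ne'
      · simp [Pi.single_apply, h]
    rw [hA, hfun, trans_pow G hdeg t (sv • ev1) u, map_smul]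
    simp only [PiLp.smul_apply, smul_eq_mul, hsudef]
    rfl
  -- final computation
  set R : ℝ := ((T ^ t) r) u with hRdef
  have hTtu : ((T ^ t) ev1) u = cP * su + ((-1:ℝ) ^ t * cM) * (σ u * su) + R := by
    rw [hTt]
    simp only [PiLp.add_apply, PiLp.smul_apply, smul_eq_mul]
    rw [hwpdef, wP_apply, hwmdef, wM_apply, hRdef, hsudef]
  have hsv2 : sv * sv = (G.degree v : ℝ) := Real.mul_self_sqrt (by positivity)
  have hstat : statPi G v = (G.degree v : ℝ) / (2 * m) := by
    rw [statPi, hmdef]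
  have hmain : (transP G ^ t) u v - statPi G v * (1 + (-1:ℝ) ^ t * (σ u * σ v))
      = su⁻¹ * sv * R := by
    rw [hentry, hTtu, hstat, hcPdef, hcMdef]
    have e1 : su⁻¹ * su = 1 := inv_mul_cancel₀ hsu.ne'
    linear_combination (sv * sv * (1 + (-1:ℝ) ^ t * (σ u * σ v)) / (2 * m)) * e1
      + ((1 + (-1:ℝ) ^ t * (σ u * σ v)) / (2 * m)) * hsv2
  rw [hmain]
  -- bound the error term
  have hRK := hIter t r hrK
  have hRb : |R| ≤ (1 - μ) ^ t := by
    calc |R| ≤ ‖(T ^ t) r‖ := abs_apply_le_norm _ u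
      _ ≤ (1 - μ) ^ t * ‖r‖ := hRK.2
      _ ≤ (1 - μ) ^ t * 1 := mul_le_mul_of_nonneg_left hrnorm (by positivity)
      _ = (1 - μ) ^ t := mul_one _
  have hsu1 : 1 ≤ su := by
    rw [hsudef]
    rw [show (1:ℝ) = Real.sqrt 1 from (Real.sqrt_one).symm]
    apply Real.sqrt_le_sqrt
    exact_mod_cast hdeg u
  have hsvn : sv ≤ Real.sqrt (Fintype.card V) := by
    rw [hsvdef]
    apply Real.sqrt_le_sqrt
    exact_mod_cast (G.degree_lt_card_verts v).le
  have hcard2 : (2:ℝ) ≤ (Fintype.card V : ℝ) := by exact_mod_cast hn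
  calc |su⁻¹ * sv * R| = su⁻¹ * sv * |R| := by
        rw [abs_mul]
        congr 1
        rw [abs_of_nonneg (by positivity)]
    _ ≤ 1 * Real.sqrt (Fintype.card V) * ((1 - μ) ^ t) := by
        apply mul_le_mul
        · apply mul_le_mul
          · rw [inv_le_one_iff₀]; right; exact hsu1
          · exact hsvn
          · exact hsv.le
          · norm_num
        · exact hRb
        · exact abs_nonneg R
        · positivity
    _ = Real.sqrt (Fintype.card V) * (1 - μ) ^ t := by ring
    _ ≤ (Fintype.card V : ℝ) ^ (-3 : ℤ) :=
        endgame _ hcard2 μ hμpos hμle t ht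



end Aux

theorem mixing_bipartite {V : Type*} [Fintype V] [DecidableEq V]
    (G : SimpleGraph V) [DecidableRel G.Adj]
    (hconn : G.Connected)
    (V₁ V₂ : Set V)
    (hpart : ∀ w : V, (w ∈ V₁ ↔ w ∉ V₂))
    (hbip : ∀ u v : V, G.Adj u v → ((u ∈ V₁ ∧ v ∈ V₂) ∨ (u ∈ V₂ ∧ v ∈ V₁)))
    (t : ℕ) (ht : 4 * Real.log (Fintype.card V) / specMu G ≤ (t : ℝ))
    (u v : V) :
    (((u ∈ V₁ ∧ v ∈ V₂) ∨ (u ∈ V₂ ∧ v ∈ V₁)) →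
      |(transP G ^ t) u v - statPi G v * (1 + (-1 : ℝ) ^ (t + 1))| ≤
        (Fintype.card V : ℝ) ^ (-3 : ℤ)) ∧
    (((u ∈ V₁ ∧ v ∈ V₁) ∨ (u ∈ V₂ ∧ v ∈ V₂)) →
      |(transP G ^ t) u v - statPi G v * (1 + (-1 : ℝ) ^ t)| ≤
        (Fintype.card V : ℝ) ^ (-3 : ℤ)) := by
  classical
  rcases le_or_gt 2 (Fintype.card V) with hn | hn
  · set σ : V → ℝ := fun x => if x ∈ V₁ then 1 else -1 with hσdef
    have hσsq : ∀ x, σ x * σ x = 1 := by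
      intro x; by_cases h : x ∈ V₁ <;> simp [hσdef, h]
    have hσadj : ∀ x y, G.Adj x y → σ y = -σ x := by
      intro x y hxy
      rcases hbip x y hxy with ⟨hx1, hy2⟩ | ⟨hx2, hy1⟩
      · have hy1 : y ∉ V₁ := fun h => (hpart y).mp h hy2
        simp [hσdef, hx1, hy1]
      · have hx1 : x ∉ V₁ := fun h => (hpart x).mp h hx2
        simp [hσdef, hx1, hy1]
    have hkey := key G hconn hn σ hσsq hσadj t ht u v
    constructor
    · rintro hdiff
      have hσuv : σ u * σ v = -1 := by
        rcases hdiff with ⟨hu1, hv2⟩ | ⟨hu2, hv1⟩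
        · have hv1 : v ∉ V₁ := fun h => (hpart v).mp h hv2
          simp [hσdef, hu1, hv1]
        · have hu1 : u ∉ V₁ := fun h => (hpart u).mp h hu2
          simp [hσdef, hu1, hv1]
      rw [hσuv] at hkey
      rw [show (1 + (-1:ℝ) ^ (t+1)) = (1 + (-1:ℝ) ^ t * (-1)) from by rw [pow_succ]]
      exact hkey
    · rintro hsame
      have hσuv : σ u * σ v = 1 := by
        rcases hsame with ⟨hu1, hv1⟩ | ⟨hu2, hv2⟩
        · simp [hσdef, hu1, hv1]
        · have hu1 : u ∉ V₁ := fun h => (hpart u).mp h hu2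
          have hv1 : v ∉ V₁ := fun h => (hpart v).mp h hv2
          simp [hσdef, hu1, hv1]
      rw [hσuv, mul_one] at hkey
      exact hkey
  · -- the one-vertex case
    haveI : Nonempty V := ⟨u⟩
    have hcard : Fintype.card V = 1 := by
      have := Fintype.card_pos_iff.mpr ‹Nonempty V›
      omega
    haveI : Subsingleton V := Fintype.card_le_one_iff_subsingleton.mp (by omega)
    have huv : u = v := Subsingleton.elim u v
    have hP0 : transP G = 0 := by
      funext x y
      have hnadj : ¬ G.Adj x y := fun h => G.ne_of_adj h (Subsingleton.elim x y)
      simp [transP, hnadj]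
    have hdeg0 : G.degree v = 0 := by
      rw [← SimpleGraph.card_neighborFinset_eq_degree]
      have : G.neighborFinset v = ∅ := by
        ext z
        simp only [SimpleGraph.mem_neighborFinset, Finset.notMem_empty, iff_false]
        exact fun h => G.ne_of_adj h (Subsingleton.elim v z)
      rw [this, Finset.card_empty]
    have hstat0 : statPi G v = 0 := by rw [statPi, hdeg0]; simp
    have hbound : ∀ a : ℝ, |(transP G ^ t) u v - statPi G v * a| ≤
        (Fintype.card V : ℝ) ^ (-3 : ℤ) := by
      intro a
      rw [hstat0, zero_mul, sub_zero, hcard]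
      simp only [Nat.cast_one, one_zpow]
      cases t with
      | zero =>
        rw [pow_zero, huv, Matrix.one_apply_eq, abs_one]
      | succ s =>
        rw [hP0, zero_pow (Nat.succ_ne_zero s), Matrix.zero_apply, abs_zero]
        norm_num
    exact ⟨fun _ => hbound _, fun _ => hbound _⟩
end

section
/- Let G be a finite undirected connected simple non-bipartite graph with n vertices. Then for every integer t ≥ 0 and all vertices u, v, |(P^t)_{u,v} − π(v)| ≤ (1−μ)^t · sqrt(deg(v)/deg(u)). -/
open Finset

/-- A graph is bipartite if its vertices can be split into a set `S` such that every
edge goes between `S` and its complement. -/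
def IsBipartition {V : Type*} (G : SimpleGraph V) (S : Set V) : Prop :=
  ∀ u v : V, G.Adj u v → ((u ∈ S ∧ v ∉ S) ∨ (u ∉ S ∧ v ∈ S))

set_option linter.unusedSectionVars false

namespace SpectralProofAux

open Matrix SimpleGraph

variable {V : Type*} [Fintype V] [DecidableEq V] (G : SimpleGraph V) [DecidableRel G.Adj]

/-- square root of the degree -/
noncomputable def sdeg (v : V) : ℝ := Real.sqrt (G.degree v)

/-- the symmetrized transition matrix `D^{1/2} P D^{-1/2}` -/
noncomputable def matM : Matrix V V ℝ :=
  fun u v => if G.Adj u v then (sdeg G u * sdeg G v)⁻¹ else 0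

/-- unit eigenvector for eigenvalue 1 -/
noncomputable def phi (v : V) : ℝ := sdeg G v / Real.sqrt (2 * G.edgeFinset.card)

/-- `M` minus the rank-one projection onto `phi` -/
noncomputable def matQ : Matrix V V ℝ := matM G - Matrix.vecMulVec (phi G) (phi G)

/-- the second eigenvalue bound -/
noncomputable def beta : ℝ :=
  sSup {r : ℝ | ∃ lam : ℝ,
      Module.End.HasEigenvalue (Matrix.mulVecLin (transP G)) lam ∧ |lam| < 1 ∧ r = |lam|}

variable {G}

lemma sdeg_pos (hd : ∀ w, 0 < G.degree w) (v : V) : 0 < sdeg G v :=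
  Real.sqrt_pos.mpr (by exact_mod_cast hd v)

lemma sdeg_sq (v : V) : sdeg G v * sdeg G v = G.degree v :=
  Real.mul_self_sqrt (by positivity)

lemma twoE_pos [Nonempty V] (hd : ∀ w, 0 < G.degree w) :
    0 < (2 * G.edgeFinset.card : ℝ) := by
  have h : ∑ w, G.degree w = 2 * G.edgeFinset.card := G.sum_degrees_eq_twice_card_edges
  have h2 : 0 < ∑ w, G.degree w :=
    Finset.sum_pos (fun w _ => hd w) ⟨Classical.arbitrary V, Finset.mem_univ _⟩
  rw [h] at h2
  exact_mod_cast h2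

lemma sqrt2E_sq [Nonempty V] (hd : ∀ w, 0 < G.degree w) :
    Real.sqrt (2 * G.edgeFinset.card) * Real.sqrt (2 * G.edgeFinset.card)
      = (2 * G.edgeFinset.card : ℝ) :=
  Real.mul_self_sqrt (twoE_pos hd).le

lemma ite_adj_sum (u : V) (f : V → ℝ) :
    (∑ v, if G.Adj u v then f v else 0) = ∑ v ∈ G.neighborFinset u, f v := by
  rw [neighborFinset_eq_filter, Finset.sum_filter]

lemma sum_sdeg_sq [Nonempty V] : ∑ v, sdeg G v * sdeg G v = (2 * G.edgeFinset.card : ℝ) := by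
  have : ∑ v, sdeg G v * sdeg G v = ∑ v, (G.degree v : ℝ) :=
    Finset.sum_congr rfl (fun v _ => sdeg_sq v)
  rw [this, ← Nat.cast_sum]
  exact_mod_cast congrArg (Nat.cast : ℕ → ℝ) G.sum_degrees_eq_twice_card_edges

lemma phi_dot [Nonempty V] (hd : ∀ w, 0 < G.degree w) : phi G ⬝ᵥ phi G = 1 := by
  unfold dotProduct phi
  have h := sqrt2E_sq hd
  have h0 := twoE_pos hd
  calc ∑ v, sdeg G v / Real.sqrt (2 * G.edgeFinset.card) *
        (sdeg G v / Real.sqrt (2 * G.edgeFinset.card))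
      = (∑ v, sdeg G v * sdeg G v) / (2 * G.edgeFinset.card : ℝ) := by
        rw [Finset.sum_div]
        refine Finset.sum_congr rfl (fun v _ => ?_)
        rw [div_mul_div_comm, h]
    _ = 1 := by rw [sum_sdeg_sq]; exact div_self h0.ne'

lemma matM_symm (u v : V) : matM G u v = matM G v u := by
  unfold matM
  by_cases h : G.Adj u v
  · rw [if_pos h, if_pos h.symm, mul_comm]
  · rw [if_neg h, if_neg (fun h' => h h'.symm)]

lemma matQ_herm : (matQ G).IsHermitian := by
  ext u v
  simp only [conjTranspose_apply, matQ, Matrix.sub_apply, vecMulVec_apply, star_trivial]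
  rw [matM_symm, mul_comm]

lemma matM_mulVec_phi (hd : ∀ w, 0 < G.degree w) : matM G *ᵥ phi G = phi G := by
  funext u
  have hsu := sdeg_pos hd u
  show ∑ v, matM G u v * phi G v = phi G u
  simp only [matM, phi, ite_mul, zero_mul]
  rw [ite_adj_sum]
  have : ∀ v ∈ G.neighborFinset u,
      (sdeg G u * sdeg G v)⁻¹ * (sdeg G v / Real.sqrt (2 * G.edgeFinset.card))
        = (sdeg G u)⁻¹ * (Real.sqrt (2 * G.edgeFinset.card))⁻¹ := by
    intro v _
    have hsv := sdeg_pos hd v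
    field_simp
  rw [Finset.sum_congr rfl this, Finset.sum_const, card_neighborFinset_eq_degree,
    nsmul_eq_mul]
  rw [div_eq_mul_inv, ← sdeg_sq u]
  field_simp

lemma transP_mulVec_apply (z : V → ℝ) (a : V) :
    (transP G *ᵥ z) a = (∑ w ∈ G.neighborFinset a, z w) * ((G.degree a : ℝ))⁻¹ := by
  show ∑ v, transP G a v * z v = _
  simp only [transP, ite_mul, zero_mul]
  rw [ite_adj_sum, ← Finset.mul_sum, mul_comm]

lemma connected_prop (hconn : G.Connected) {p : V → Prop}
    (hstep : ∀ a b, G.Adj a b → p a → p b) {u0 : V} (h0 : p u0) (v : V) : p v := by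
  have key : ∀ {a b : V} (_ : G.Walk a b), p a → p b := by
    intro a b w
    induction w with
    | nil => exact id
    | cons h _ ih => exact fun ha => ih (hstep _ _ h ha)
  obtain ⟨w⟩ := hconn.preconnected u0 v
  exact key w h0

lemma abs_eig_le_one (hd : ∀ w, 0 < G.degree w) {z : V → ℝ} {lam : ℝ}
    (hz : transP G *ᵥ z = lam • z) (hz0 : z ≠ 0) : |lam| ≤ 1 := by
  obtain ⟨w0, hw0⟩ := Function.ne_iff.mp hz0
  obtain ⟨u, -, hu⟩ := Finset.exists_max_image Finset.univ (fun v => |z v|)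
    ⟨w0, Finset.mem_univ _⟩
  have hm : 0 < |z u| := lt_of_lt_of_le (abs_pos.mpr hw0) (hu w0 (Finset.mem_univ _))
  have h1 : lam * z u = (∑ w ∈ G.neighborFinset u, z w) * ((G.degree u : ℝ))⁻¹ := by
    rw [← transP_mulVec_apply, hz]; simp
  have h2 : |lam| * |z u| ≤ |z u| := by
    rw [← abs_mul, h1, abs_mul]
    have h3 : |∑ w ∈ G.neighborFinset u, z w| ≤ (G.degree u : ℝ) * |z u| := by
      calc |∑ w ∈ G.neighborFinset u, z w| ≤ ∑ w ∈ G.neighborFinset u, |z w| :=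
            Finset.abs_sum_le_sum_abs _ _
        _ ≤ ∑ _w ∈ G.neighborFinset u, |z u| :=
            Finset.sum_le_sum (fun w _ => hu w (Finset.mem_univ _))
        _ = (G.degree u : ℝ) * |z u| := by
            rw [Finset.sum_const, card_neighborFinset_eq_degree, nsmul_eq_mul]
    have hdeg : (0:ℝ) < (G.degree u : ℝ) := by exact_mod_cast hd u
    calc |∑ w ∈ G.neighborFinset u, z w| * |((G.degree u : ℝ))⁻¹|
        ≤ ((G.degree u : ℝ) * |z u|) * ((G.degree u : ℝ))⁻¹ := by
          rw [abs_of_nonneg (inv_nonneg.mpr hdeg.le)]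
          exact mul_le_mul_of_nonneg_right h3 (inv_nonneg.mpr hdeg.le)
      _ = |z u| := by field_simp
  exact le_of_mul_le_mul_right (by rwa [one_mul]) hm

lemma neighbor_sum_of_eig {z : V → ℝ} {lam : ℝ}
    (hz : transP G *ᵥ z = lam • z) (hd : ∀ w, 0 < G.degree w) (a : V) :
    ∑ w ∈ G.neighborFinset a, z w = lam * z a * (G.degree a : ℝ) := by
  have h1 : (∑ w ∈ G.neighborFinset a, z w) * ((G.degree a : ℝ))⁻¹ = lam * z a := by
    rw [← transP_mulVec_apply, hz]; simp
  have hdeg : ((G.degree a : ℝ)) ≠ 0 := by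
    have : (0:ℝ) < (G.degree a : ℝ) := by exact_mod_cast hd a
    exact this.ne'
  field_simp at h1
  linarith [h1]

lemma eig_one_const (hd : ∀ w, 0 < G.degree w) (hconn : G.Connected) {z : V → ℝ}
    (hz : transP G *ᵥ z = z) : ∃ c : ℝ, ∀ v, z v = c := by
  haveI : Nonempty V := hconn.nonempty
  obtain ⟨u0, -, hu0⟩ := Finset.exists_max_image Finset.univ z ⟨Classical.arbitrary V,
    Finset.mem_univ _⟩
  refine ⟨z u0, ?_⟩
  have hz' : transP G *ᵥ z = (1:ℝ) • z := by rw [one_smul]; exact hz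
  have hstep : ∀ a b, G.Adj a b → z a = z u0 → z b = z u0 := by
    intro a b hab ha
    have hsum := neighbor_sum_of_eig hz' hd a
    rw [one_mul] at hsum
    have hzero : ∑ w ∈ G.neighborFinset a, (z u0 - z w) = 0 := by
      rw [Finset.sum_sub_distrib, Finset.sum_const, card_neighborFinset_eq_degree,
        nsmul_eq_mul, hsum, ha]
      ring
    have := (Finset.sum_eq_zero_iff_of_nonneg
      (fun w _ => sub_nonneg.mpr (hu0 w (Finset.mem_univ _)))).mp hzero b
      ((mem_neighborFinset G a b).mpr hab)
    linarith [this]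
  exact connected_prop hconn hstep rfl

lemma eig_neg_one_bipartite (hd : ∀ w, 0 < G.degree w) (hconn : G.Connected) {z : V → ℝ}
    (hz : transP G *ᵥ z = (-1:ℝ) • z) (hz0 : z ≠ 0) : ∃ S : Set V, IsBipartition G S := by
  obtain ⟨w0, hw0⟩ := Function.ne_iff.mp hz0
  obtain ⟨u0, -, hu0⟩ := Finset.exists_max_image Finset.univ (fun v => |z v|)
    ⟨w0, Finset.mem_univ _⟩
  set m := |z u0| with hm_def
  have hm : 0 < m := lt_of_lt_of_le (abs_pos.mpr hw0) (hu0 w0 (Finset.mem_univ _))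
  have key : ∀ a, |z a| = m → ∀ b, G.Adj a b → z b = -z a := by
    intro a ha b hab
    have hsum := neighbor_sum_of_eig hz hd a
    rw [neg_one_mul] at hsum
    rcases (abs_eq hm.le).mp ha with hpos | hneg
    · have hzero : ∑ w ∈ G.neighborFinset a, (z a + z w) = 0 := by
        rw [Finset.sum_add_distrib, Finset.sum_const, card_neighborFinset_eq_degree,
          nsmul_eq_mul, hsum]
        ring
      have := (Finset.sum_eq_zero_iff_of_nonneg (fun w _ => by
        have := hu0 w (Finset.mem_univ _)
        have := abs_le.mp (this.trans_eq rfl)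
        rw [hpos]; linarith [this.1])).mp hzero b ((mem_neighborFinset G a b).mpr hab)
      linarith [this]
    · have hzero : ∑ w ∈ G.neighborFinset a, (z a + z w) = 0 := by
        rw [Finset.sum_add_distrib, Finset.sum_const, card_neighborFinset_eq_degree,
          nsmul_eq_mul, hsum]
        ring
      have := (Finset.sum_eq_zero_iff_of_nonpos (fun w _ => by
        have := abs_le.mp (hu0 w (Finset.mem_univ _))
        rw [hneg]; linarith [this.2])).mp hzero b ((mem_neighborFinset G a b).mpr hab)
      linarith [this]
  have habs : ∀ v, |z v| = m := by
    refine connected_prop hconn (fun a b hab ha => ?_) rfl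
    rw [key a ha b hab, abs_neg, ha]
  refine ⟨{v | 0 < z v}, fun a b hab => ?_⟩
  have hzb : z b = -z a := key a (habs a) b hab
  have hza : z a ≠ 0 := by
    intro h
    rw [← habs a, h, abs_zero] at hm
    exact lt_irrefl 0 hm
  rcases hza.lt_or_gt with hlt | hgt
  · right
    exact ⟨by simp [Set.mem_setOf_eq]; linarith, by simp [Set.mem_setOf_eq]; linarith⟩
  · left
    exact ⟨by simp [Set.mem_setOf_eq]; linarith, by simp [Set.mem_setOf_eq]; linarith⟩

lemma beta_nonneg : 0 ≤ beta G :=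
  Real.sSup_nonneg (by rintro r ⟨lam, -, -, rfl⟩; exact abs_nonneg _)

lemma beta_bddAbove : BddAbove {r : ℝ | ∃ lam : ℝ,
    Module.End.HasEigenvalue (Matrix.mulVecLin (transP G)) lam ∧ |lam| < 1 ∧ r = |lam|} :=
  ⟨1, by rintro r ⟨lam, -, hlt, rfl⟩; exact hlt.le⟩

lemma vecMulVec_mulVec_eq (a b x : V → ℝ) :
    Matrix.vecMulVec a b *ᵥ x = (b ⬝ᵥ x) • a := by
  funext u
  show ∑ v, Matrix.vecMulVec a b u v * x v = _
  simp only [Matrix.vecMulVec_apply, Pi.smul_apply, smul_eq_mul]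
  rw [Finset.sum_congr rfl (fun v _ => show a u * b v * x v = a u * (b v * x v) by ring),
    ← Finset.mul_sum, mul_comm]
  rfl

lemma matQ_transpose : (matQ G)ᵀ = matQ G := by
  ext u v
  simp only [Matrix.transpose_apply, matQ, Matrix.sub_apply, Matrix.vecMulVec_apply]
  rw [matM_symm, mul_comm]

lemma eig_bound (hd : ∀ w, 0 < G.degree w) (hconn : G.Connected)
    (hnonbip : ¬ ∃ S : Set V, IsBipartition G S) {x : V → ℝ} {mu : ℝ}
    (hx0 : x ≠ 0) (hx : matQ G *ᵥ x = mu • x) : |mu| ≤ beta G := by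
  haveI : Nonempty V := hconn.nonempty
  rcases eq_or_ne mu 0 with rfl | hmu0
  · simpa using beta_nonneg
  -- Q φ = 0
  have hQphi : matQ G *ᵥ phi G = 0 := by
    unfold matQ
    rw [Matrix.sub_mulVec, matM_mulVec_phi hd, vecMulVec_mulVec_eq, phi_dot hd, one_smul,
      sub_self]
  -- φ ⬝ᵥ x = 0
  have hdot : phi G ⬝ᵥ x = 0 := by
    have h1 : phi G ⬝ᵥ (matQ G *ᵥ x) = mu * (phi G ⬝ᵥ x) := by
      rw [hx, dotProduct_smul, smul_eq_mul]
    have h2 : phi G ⬝ᵥ (matQ G *ᵥ x) = 0 := by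
      rw [Matrix.dotProduct_mulVec]
      have hvm : phi G ᵥ* matQ G = 0 := by
        rw [← matQ_transpose, Matrix.vecMul_transpose, hQphi]
      rw [hvm, zero_dotProduct]
    rw [h2] at h1
    exact (mul_eq_zero.mp h1.symm).resolve_left hmu0
  -- M x = mu x
  have hMx : matM G *ᵥ x = mu • x := by
    have : matQ G *ᵥ x = matM G *ᵥ x - (phi G ⬝ᵥ x) • phi G := by
      unfold matQ
      rw [Matrix.sub_mulVec, vecMulVec_mulVec_eq]
    rw [this, hdot, zero_smul, sub_zero] at hx
    exact hx
  -- pass to P-eigenvector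
  set z : V → ℝ := fun v => x v / sdeg G v with hz_def
  have hz0 : z ≠ 0 := by
    obtain ⟨w, hw⟩ := Function.ne_iff.mp hx0
    refine Function.ne_iff.mpr ⟨w, ?_⟩
    simp only [hz_def, Pi.zero_apply]
    exact div_ne_zero hw (sdeg_pos hd w).ne'
  have hPz : transP G *ᵥ z = mu • z := by
    funext a
    have hsa := sdeg_pos hd a
    have hMa : ∑ v, matM G a v * x v = mu * x a := by
      have := congrFun hMx a
      simpa [Matrix.mulVec, dotProduct] using this
    show ∑ v, transP G a v * z v = (mu • z) a
    have hterm : ∀ v, transP G a v * z v = (sdeg G a)⁻¹ * (matM G a v * x v) := by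
      intro v
      unfold transP matM
      by_cases h : G.Adj a v
      · have hsv := sdeg_pos hd v
        rw [if_pos h, if_pos h]
        simp only [hz_def]
        rw [← sdeg_sq a, mul_inv, mul_inv, div_eq_mul_inv]
        ring
      · rw [if_neg h, if_neg h]; simp
    rw [Finset.sum_congr rfl (fun v _ => hterm v), ← Finset.mul_sum, hMa]
    simp only [Pi.smul_apply, smul_eq_mul, hz_def]
    rw [div_eq_mul_inv]
    ring
  have habs1 : |mu| ≤ 1 := abs_eig_le_one hd hPz hz0
  have hne1 : mu ≠ 1 := by
    intro h
    subst h
    rw [one_smul] at hPz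
    obtain ⟨c, hc⟩ := eig_one_const hd hconn hPz
    have hx_eq : ∀ v, x v = c * sdeg G v := by
      intro v
      have h := hc v
      simp only [hz_def] at h
      rw [div_eq_iff (sdeg_pos hd v).ne'] at h
      exact h
    have hd2 : phi G ⬝ᵥ x = c * ((2 * G.edgeFinset.card : ℝ) /
        Real.sqrt (2 * G.edgeFinset.card)) := by
      have hterm2 : ∀ v : V, phi G v * x v
          = c * (sdeg G v * sdeg G v) / Real.sqrt (2 * G.edgeFinset.card) := by
        intro v
        rw [hx_eq v]
        unfold phi
        ring
      show ∑ v, phi G v * x v = _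
      rw [Finset.sum_congr rfl (fun v _ => hterm2 v), ← Finset.sum_div, ← Finset.mul_sum,
        mul_div_assoc, sum_sdeg_sq]
    rw [hdot] at hd2
    have hpos : 0 < (2 * G.edgeFinset.card : ℝ) / Real.sqrt (2 * G.edgeFinset.card) :=
      div_pos (twoE_pos hd) (Real.sqrt_pos.mpr (twoE_pos hd))
    have hc0 : c = 0 := by
      rcases mul_eq_zero.mp hd2.symm with h | h
      · exact h
      · exact absurd h hpos.ne'
    apply hx0
    funext w
    rw [hx_eq w, hc0, zero_mul]
    rfl
  have hnem1 : mu ≠ -1 := by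
    intro h
    subst h
    exact hnonbip (eig_neg_one_bipartite hd hconn hPz hz0)
  have hlt : |mu| < 1 := by
    rcases lt_or_eq_of_le habs1 with h | h
    · exact h
    · exfalso
      rcases (abs_eq (by norm_num : (0:ℝ) ≤ 1)).mp h with h1 | h1
      · exact hne1 h1
      · exact hnem1 h1
  have hev : Module.End.HasEigenvalue (Matrix.mulVecLin (transP G)) mu := by
    refine Module.End.hasEigenvalue_of_hasEigenvector ⟨?_, hz0⟩
    rw [Module.End.mem_eigenspace_iff, Matrix.mulVecLin_apply, hPz]
  exact le_csSup beta_bddAbove ⟨mu, hev, hlt, rfl⟩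

lemma transP_pow_entry (hd : ∀ w, 0 < G.degree w) (t : ℕ) (u v : V) :
    (transP G ^ t) u v = sdeg G v / sdeg G u * ((matM G ^ t) u v) := by
  induction t generalizing v with
  | zero =>
    simp only [pow_zero]
    rcases eq_or_ne u v with rfl | hne
    · rw [Matrix.one_apply_eq, div_self (sdeg_pos hd u).ne', one_mul]
    · rw [Matrix.one_apply_ne hne, mul_zero]
  | succ t ih =>
    rw [pow_succ, pow_succ, Matrix.mul_apply, Matrix.mul_apply]
    have key : ∀ w, (transP G ^ t) u w * transP G w v
        = sdeg G v / sdeg G u * ((matM G ^ t) u w * matM G w v) := by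
      intro w
      rw [ih w]
      unfold transP matM
      by_cases h : G.Adj w v
      · rw [if_pos h, if_pos h, ← sdeg_sq w]
        have hsu := (sdeg_pos hd u).ne'
        have hsv := (sdeg_pos hd v).ne'
        have hsw := (sdeg_pos hd w).ne'
        field_simp
      · rw [if_neg h, if_neg h, mul_zero, mul_zero, mul_zero]
    rw [Finset.sum_congr rfl (fun w _ => key w), ← Finset.mul_sum]

lemma matM_mul_proj (hd : ∀ w, 0 < G.degree w) :
    matM G * Matrix.vecMulVec (phi G) (phi G) = Matrix.vecMulVec (phi G) (phi G) := by
  ext a b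
  rw [Matrix.mul_apply]
  simp only [Matrix.vecMulVec_apply]
  rw [Finset.sum_congr rfl (fun w _ => show matM G a w * (phi G w * phi G b)
      = matM G a w * phi G w * phi G b by ring), ← Finset.sum_mul]
  have : ∑ w, matM G a w * phi G w = phi G a := by
    have := congrFun (matM_mulVec_phi hd) a
    simpa [Matrix.mulVec, dotProduct] using this
  rw [this]

lemma proj_mul_matM (hd : ∀ w, 0 < G.degree w) :
    Matrix.vecMulVec (phi G) (phi G) * matM G = Matrix.vecMulVec (phi G) (phi G) := by
  ext a b
  rw [Matrix.mul_apply]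
  simp only [Matrix.vecMulVec_apply]
  rw [Finset.sum_congr rfl (fun w _ => show phi G a * phi G w * matM G w b
      = phi G a * (matM G b w * phi G w) by rw [matM_symm]; ring), ← Finset.mul_sum]
  have : ∑ w, matM G b w * phi G w = phi G b := by
    have := congrFun (matM_mulVec_phi hd) b
    simpa [Matrix.mulVec, dotProduct] using this
  rw [this]

lemma proj_mul_proj [Nonempty V] (hd : ∀ w, 0 < G.degree w) :
    Matrix.vecMulVec (phi G) (phi G) * Matrix.vecMulVec (phi G) (phi G)
      = Matrix.vecMulVec (phi G) (phi G) := by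
  ext a b
  rw [Matrix.mul_apply]
  simp only [Matrix.vecMulVec_apply]
  rw [Finset.sum_congr rfl (fun w _ => show phi G a * phi G w * (phi G w * phi G b)
      = phi G a * phi G b * (phi G w * phi G w) by ring), ← Finset.mul_sum]
  have : ∑ w, phi G w * phi G w = 1 := phi_dot hd
  rw [this, mul_one]

lemma matM_pow_proj [Nonempty V] (hd : ∀ w, 0 < G.degree w) (t : ℕ) :
    matM G ^ t * Matrix.vecMulVec (phi G) (phi G) = Matrix.vecMulVec (phi G) (phi G) := by
  induction t with
  | zero => rw [pow_zero, one_mul]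
  | succ t ih => rw [pow_succ, mul_assoc, matM_mul_proj hd, ih]

lemma matQ_pow_eq [Nonempty V] (hd : ∀ w, 0 < G.degree w) {t : ℕ} (ht : 1 ≤ t) :
    matQ G ^ t = matM G ^ t - Matrix.vecMulVec (phi G) (phi G) := by
  induction t, ht using Nat.le_induction with
  | base => rw [pow_one, pow_one]; rfl
  | succ t ht ih =>
    rw [pow_succ, ih, pow_succ]
    unfold matQ
    rw [Matrix.sub_mul, Matrix.mul_sub, Matrix.mul_sub, matM_pow_proj hd,
      proj_mul_matM hd, proj_mul_proj hd]
    abel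

lemma entry_bound (hd : ∀ w, 0 < G.degree w) (hconn : G.Connected)
    (hnonbip : ¬ ∃ S : Set V, IsBipartition G S) (t : ℕ) (u v : V) :
    |((matQ G) ^ t) u v| ≤ beta G ^ t := by
  have hQ : (matQ G).IsHermitian := matQ_herm
  set U : Matrix V V ℝ := (hQ.eigenvectorUnitary : Matrix V V ℝ) with hU
  have hUU : U * star U = 1 := (Matrix.mem_unitaryGroup_iff).mp hQ.eigenvectorUnitary.2
  have hUU' : star U * U = 1 := (Matrix.mem_unitaryGroup_iff').mp hQ.eigenvectorUnitary.2
  have hdecomp : matQ G = U * Matrix.diagonal hQ.eigenvalues * star U := by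
    have h := hQ.spectral_theorem
    rwa [RCLike.ofReal_real_eq_id, Function.id_comp] at h
  have hpow : ∀ s : ℕ, matQ G ^ s
      = U * Matrix.diagonal (fun i => hQ.eigenvalues i ^ s) * star U := by
    intro s
    induction s with
    | zero =>
      simp only [pow_zero]
      rw [show Matrix.diagonal (fun _ : V => (1:ℝ)) = 1 from Matrix.diagonal_one, mul_one, hUU]
    | succ s ih =>
      rw [pow_succ, ih]
      rw [show (U * Matrix.diagonal fun i => hQ.eigenvalues i ^ s) * star U * matQ G
          = (U * Matrix.diagonal fun i => hQ.eigenvalues i ^ s) * star U *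
            (U * Matrix.diagonal hQ.eigenvalues * star U) from by rw [← hdecomp]]
      simp only [Matrix.mul_assoc]
      rw [← Matrix.mul_assoc (star U) U, hUU', one_mul,
        ← Matrix.mul_assoc (Matrix.diagonal fun i => hQ.eigenvalues i ^ s)
          (Matrix.diagonal hQ.eigenvalues), Matrix.diagonal_mul_diagonal]
      have hfun : (fun i => hQ.eigenvalues i ^ s * hQ.eigenvalues i)
          = fun i => hQ.eigenvalues i ^ (s + 1) := funext fun i => (pow_succ _ _).symm
      rw [hfun]
  have hentry : (matQ G ^ t) u v = ∑ i, hQ.eigenvalues i ^ t * (U u i * U v i) := by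
    rw [hpow t, Matrix.mul_apply]
    refine Finset.sum_congr rfl (fun i _ => ?_)
    rw [Matrix.mul_diagonal, Matrix.star_eq_conjTranspose, Matrix.conjTranspose_apply,
      star_trivial]
    ring
  have hrow : ∀ a : V, ∑ i, U a i * U a i = 1 := by
    intro a
    have h := congrFun (congrFun hUU a) a
    rw [Matrix.mul_apply] at h
    rw [Finset.sum_congr rfl (fun i _ => show U a i * U a i = U a i * star U i a by
      rw [Matrix.star_eq_conjTranspose, Matrix.conjTranspose_apply, star_trivial]), h,
      Matrix.one_apply_eq]
  have hev : ∀ i, |hQ.eigenvalues i| ≤ beta G := by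
    intro i
    have hbne : ⇑(hQ.eigenvectorBasis i) ≠ 0 := by
      intro h
      exact hQ.eigenvectorBasis.orthonormal.ne_zero i (by ext w; exact congrFun h w)
    exact eig_bound hd hconn hnonbip hbne (hQ.mulVec_eigenvectorBasis i)
  have hCS : ∑ i, |U u i| * |U v i| ≤ 1 := by
    have h2 := Finset.sum_mul_sq_le_sq_mul_sq Finset.univ (fun i => |U u i|) (fun i => |U v i|)
    have hu1 : ∑ i, |U u i| ^ 2 = 1 := by
      rw [Finset.sum_congr rfl (fun i _ => show |U u i| ^ 2 = U u i * U u i by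
        rw [sq_abs, sq])]
      exact hrow u
    have hv1 : ∑ i, |U v i| ^ 2 = 1 := by
      rw [Finset.sum_congr rfl (fun i _ => show |U v i| ^ 2 = U v i * U v i by
        rw [sq_abs, sq])]
      exact hrow v
    rw [hu1, hv1, mul_one] at h2
    exact (pow_le_one_iff_of_nonneg (Finset.sum_nonneg fun i _ =>
      mul_nonneg (abs_nonneg _) (abs_nonneg _)) two_ne_zero).mp h2
  rw [hentry]
  calc |∑ i, hQ.eigenvalues i ^ t * (U u i * U v i)|
      ≤ ∑ i, |hQ.eigenvalues i ^ t * (U u i * U v i)| := Finset.abs_sum_le_sum_abs _ _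
    _ ≤ ∑ i, beta G ^ t * (|U u i| * |U v i|) := by
        refine Finset.sum_le_sum (fun i _ => ?_)
        rw [abs_mul, abs_mul, abs_pow]
        exact mul_le_mul (pow_le_pow_left₀ (abs_nonneg _) (hev i) t) le_rfl
          (by positivity) (pow_nonneg beta_nonneg t)
    _ = beta G ^ t * ∑ i, |U u i| * |U v i| := by rw [Finset.mul_sum]
    _ ≤ beta G ^ t * 1 := mul_le_mul_of_nonneg_left hCS (pow_nonneg beta_nonneg t)
    _ = beta G ^ t := mul_one _

end SpectralProofAux

open SpectralProofAux

theorem spectral_bound_nonbipartite {V : Type*} [Fintype V] [DecidableEq V]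
    (G : SimpleGraph V) [DecidableRel G.Adj]
    (hconn : G.Connected)
    (hnonbip : ¬ ∃ S : Set V, IsBipartition G S)
    (t : ℕ) (u v : V) :
    |(transP G ^ t) u v - statPi G v| ≤
      (1 - specMu G) ^ t * Real.sqrt ((G.degree v : ℝ) / (G.degree u : ℝ)) := by
  classical
  have hedge : ∃ a b, G.Adj a b := by
    by_contra h
    push_neg at h
    exact hnonbip ⟨∅, fun a b hab => absurd hab (h a b)⟩
  obtain ⟨a0, b0, hab0⟩ := hedge
  haveI : Nonempty V := ⟨a0⟩
  have hd : ∀ w, 0 < G.degree w := by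
    intro w
    rw [SimpleGraph.degree_pos_iff_exists_adj]
    rcases eq_or_ne w a0 with rfl | hne
    · exact ⟨b0, hab0⟩
    · obtain ⟨p⟩ := hconn.preconnected w a0
      cases p with
      | nil => exact absurd rfl hne
      | cons h _ => exact ⟨_, h⟩
  have h2E : (0:ℝ) < 2 * G.edgeFinset.card := twoE_pos hd
  have hsu := sdeg_pos hd u
  have hsv := sdeg_pos hd v
  have hbeta_eq : 1 - specMu G = beta G := by
    unfold specMu beta; ring
  have hsqrt : Real.sqrt ((G.degree v : ℝ) / (G.degree u : ℝ)) = sdeg G v / sdeg G u :=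
    Real.sqrt_div (Nat.cast_nonneg _) _
  have hdeg_le : ∀ w : V, (G.degree w : ℝ) ≤ 2 * G.edgeFinset.card := by
    intro w
    have h := G.sum_degrees_eq_twice_card_edges
    have h1 : G.degree w ≤ ∑ x, G.degree x :=
      Finset.single_le_sum (f := fun x => G.degree x) (fun x _ => Nat.zero_le _)
        (Finset.mem_univ w)
    rw [h] at h1
    exact_mod_cast h1
  rcases Nat.eq_zero_or_pos t with rfl | ht
  · -- t = 0
    simp only [pow_zero, one_mul]
    rw [hsqrt]
    rcases eq_or_ne u v with rfl | hne
    · rw [show ((1 : Matrix V V ℝ) u u) = 1 from Matrix.one_apply_eq u,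
        div_self hsu.ne']
      have h1 : (0:ℝ) < (G.degree u : ℝ) := by exact_mod_cast hd u
      have h2 : statPi G u ≤ 1 := by
        unfold statPi
        exact div_le_one_of_le₀ (hdeg_le u) h2E.le
      have h3 : 0 ≤ statPi G u := by
        unfold statPi
        exact div_nonneg h1.le h2E.le
      rw [abs_of_nonneg (by linarith)]
      linarith
    · rw [show ((1 : Matrix V V ℝ) u v) = 0 from Matrix.one_apply_ne hne,
        zero_sub, abs_neg]
      have h3 : 0 ≤ statPi G v := by
        unfold statPi
        exact div_nonneg (Nat.cast_nonneg _) h2E.le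
      rw [abs_of_nonneg h3]
      unfold statPi
      rw [div_le_div_iff₀ h2E hsu]
      have e1 : (G.degree v : ℝ) = sdeg G v * sdeg G v := (sdeg_sq v).symm
      have e2 : (2 * G.edgeFinset.card : ℝ)
          = Real.sqrt (2 * G.edgeFinset.card) * Real.sqrt (2 * G.edgeFinset.card) :=
        (sqrt2E_sq hd).symm
      have l1 : sdeg G u ≤ Real.sqrt (2 * G.edgeFinset.card) :=
        Real.sqrt_le_sqrt (hdeg_le u)
      have l2 : sdeg G v ≤ Real.sqrt (2 * G.edgeFinset.card) :=
        Real.sqrt_le_sqrt (hdeg_le v)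
      have hmul : sdeg G v * sdeg G u
          ≤ Real.sqrt (2 * G.edgeFinset.card) * Real.sqrt (2 * G.edgeFinset.card) :=
        mul_le_mul l2 l1 hsu.le (Real.sqrt_nonneg _)
      calc (G.degree v : ℝ) * sdeg G u = sdeg G v * (sdeg G v * sdeg G u) := by
            rw [e1]; ring
        _ ≤ sdeg G v * (Real.sqrt (2 * G.edgeFinset.card)
              * Real.sqrt (2 * G.edgeFinset.card)) :=
            mul_le_mul_of_nonneg_left hmul hsv.le
        _ = sdeg G v * (2 * G.edgeFinset.card) := by rw [← e2]
  · -- t ≥ 1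
    have hphi : phi G u * phi G v = sdeg G u * sdeg G v / (2 * G.edgeFinset.card) := by
      unfold phi
      rw [div_mul_div_comm, sqrt2E_sq hd]
    have hstat : statPi G v = (sdeg G v / sdeg G u) * (phi G u * phi G v) := by
      refine Eq.symm ?_
      rw [hphi]
      have hring : sdeg G v / sdeg G u * (sdeg G u * sdeg G v / (2 * G.edgeFinset.card))
          = (sdeg G v * sdeg G v) * (sdeg G u / sdeg G u) / (2 * G.edgeFinset.card) := by
        ring
      rw [hring, div_self hsu.ne', mul_one, sdeg_sq v]
      rfl
    have hkey : (transP G ^ t) u v - statPi G v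
        = (sdeg G v / sdeg G u) * ((matQ G ^ t) u v) := by
      rw [transP_pow_entry hd t u v, matQ_pow_eq hd ht, Matrix.sub_apply,
        Matrix.vecMulVec_apply, hstat]
      ring
    rw [hkey, abs_mul, abs_of_nonneg (div_nonneg hsv.le hsu.le), hsqrt, hbeta_eq]
    calc (sdeg G v / sdeg G u) * |(matQ G ^ t) u v|
        ≤ (sdeg G v / sdeg G u) * beta G ^ t :=
          mul_le_mul_of_nonneg_left (entry_bound hd hconn hnonbip t u v)
            (div_nonneg hsv.le hsu.le)
      _ = beta G ^ t * (sdeg G v / sdeg G u) := mul_comm _ _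
end

section
/- Let (X_t)_{t∈ℕ} be a sequence of nonnegative, integrable real-valued random variables adapted to a filtration (ℱ_t) on a probability space, with X_0 equal to a constant x₀. Let 0 < γ < 1 and β > 0 with x₀ ≥ β, and suppose that for every t ≥ 1, almost surely on the event {X_{t−1} ≥ β} one has E[X_t | ℱ_{t−1}] ≤ (1−γ)·X_{t−1}. Define the stopping time τ := min{t ∈ ℕ : X_t ≤ β}. Then P( τ ≥ (1/γ)·(1 + ln(x₀/β)) ) ≤ 1/2. -/
open MeasureTheory

/-- Lemma 9 of the paper: a nonnegative stochastic process that decreases in conditional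
expectation by a factor `1-γ` as long as it is at least `β` falls below `β` within
`(1/γ)·(1 + ln(x₀/β))` steps with probability at least `1/2`. The event
`τ ≥ (1/γ)·(1 + ln(x₀/β))` for the stopping time `τ = min{t : X_t ≤ β}` is expressed
equivalently as: `X t ω > β` for all `t` below that bound. -/
theorem stopping_time_bound {Ω : Type*} {m0 : MeasurableSpace Ω}
    (P : Measure Ω) [IsProbabilityMeasure P]
    (ℱ : Filtration ℕ m0)
    (X : ℕ → Ω → ℝ)
    (hadapted : Adapted ℱ X)
    (hint : ∀ t : ℕ, Integrable (X t) P)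
    (hnonneg : ∀ t : ℕ, ∀ ω : Ω, 0 ≤ X t ω)
    (x₀ β γ : ℝ)
    (hX0 : X 0 = fun _ => x₀)
    (hγ0 : 0 < γ) (hγ1 : γ < 1)
    (hβ : 0 < β) (hx₀β : β ≤ x₀)
    (hdec : ∀ t : ℕ, 1 ≤ t →
      ∀ᵐ ω ∂P, β ≤ X (t - 1) ω → (P[X t | ℱ (t - 1)]) ω ≤ (1 - γ) * X (t - 1) ω) :
    P {ω : Ω | ∀ t : ℕ, (t : ℝ) < (1 / γ) * (1 + Real.log (x₀ / β)) → β < X t ω} ≤ 1 / 2 := by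
  classical
  set L : ℝ := Real.log (x₀ / β) with hLdef
  set B : ℝ := (1 / γ) * (1 + L) with hBdef
  have hx0 : 0 < x₀ := lt_of_lt_of_le hβ hx₀β
  have hL : 0 ≤ L := Real.log_nonneg (by rw [le_div_iff₀ hβ]; linarith)
  have hB1 : 1 < B := by
    have h1 : 1 < 1 / γ := (one_lt_div hγ0).mpr hγ1
    nlinarith
  -- the sets E t = {ω | ∀ s < t, β ≤ X s ω}
  set E : ℕ → Set Ω := fun t => {ω | ∀ s, s < t → β ≤ X s ω} with hEdef
  have hmeas : ∀ t : ℕ, MeasurableSet[ℱ t] {ω | β ≤ X t ω} := fun t =>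
    (hadapted t) measurableSet_Ici
  have hE : ∀ t : ℕ, MeasurableSet[ℱ t] (E t) := by
    intro t
    have : E t = ⋂ s ∈ Finset.range t, {ω | β ≤ X s ω} := by
      ext ω; simp [hEdef]
    rw [this]
    refine MeasurableSet.biInter (Set.to_countable _) (fun s hs => ?_)
    exact ℱ.mono (le_of_lt (Finset.mem_range.mp hs)) _ (hmeas s)
  have hES : ∀ t : ℕ, MeasurableSet[ℱ t] (E t ∩ {ω | β ≤ X t ω}) := fun t =>
    (hE t).inter (hmeas t)
  -- key induction: ∫_{E t} X t ≤ (1-γ)^t * x₀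
  have h1γ : 0 ≤ 1 - γ := by linarith
  have key : ∀ t : ℕ, ∫ ω in E t, X t ω ∂P ≤ (1 - γ) ^ t * x₀ := by
    intro t
    induction t with
    | zero =>
      have hE0 : E 0 = Set.univ := by ext ω; simp [hEdef]
      rw [hE0, hX0]
      simp
    | succ t ih =>
      set S : Set Ω := E t ∩ {ω | β ≤ X t ω} with hSdef
      have hSsub : E (t + 1) ⊆ S := by
        intro ω hω
        exact ⟨fun s hs => hω s (Nat.lt_succ_of_lt hs), hω t (Nat.lt_succ_self t)⟩
      have h1 : ∫ ω in E (t + 1), X (t + 1) ω ∂P ≤ ∫ ω in S, X (t + 1) ω ∂P := by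
        refine setIntegral_mono_set (hint (t + 1)).integrableOn ?_ hSsub.eventuallyLE
        exact Filter.Eventually.of_forall (fun ω => hnonneg (t + 1) ω)
      have h2 : ∫ ω in S, X (t + 1) ω ∂P = ∫ ω in S, (P[X (t + 1) | ℱ t]) ω ∂P :=
        (setIntegral_condExp (ℱ.le t) (hint (t + 1)) (hES t)).symm
      have h3 : ∫ ω in S, (P[X (t + 1) | ℱ t]) ω ∂P ≤
          ∫ ω in S, (1 - γ) * X t ω ∂P := by
        refine setIntegral_mono_ae_restrict integrable_condExp.integrableOn
          (((hint t).const_mul (1 - γ))).integrableOn ?_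
        have hae : ∀ᵐ ω ∂P.restrict S, (P[X (t + 1) | ℱ t]) ω ≤ (1 - γ) * X t ω := by
          rw [ae_restrict_iff' (ℱ.le t _ (hES t))]
          have hd := hdec (t + 1) (Nat.le_add_left 1 t)
          simp only [Nat.add_sub_cancel] at hd
          filter_upwards [hd] with ω h hω
          exact h hω.2
        exact hae
      have h4 : ∫ ω in S, (1 - γ) * X t ω ∂P ≤ ∫ ω in E t, (1 - γ) * X t ω ∂P := by
        refine setIntegral_mono_set ((hint t).const_mul (1 - γ)).integrableOn ?_
          (Set.inter_subset_left).eventuallyLE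
        exact Filter.Eventually.of_forall (fun ω => mul_nonneg h1γ (hnonneg t ω))
      have h5 : ∫ ω in E t, (1 - γ) * X t ω ∂P = (1 - γ) * ∫ ω in E t, X t ω ∂P :=
        integral_const_mul _ _
      calc ∫ ω in E (t + 1), X (t + 1) ω ∂P ≤ ∫ ω in S, (1 - γ) * X t ω ∂P := by
            rw [← h2] at h3; exact le_trans h1 h3
        _ ≤ (1 - γ) * ∫ ω in E t, X t ω ∂P := by rw [← h5]; exact h4
        _ ≤ (1 - γ) * ((1 - γ) ^ t * x₀) := mul_le_mul_of_nonneg_left ih h1γ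
        _ = (1 - γ) ^ (t + 1) * x₀ := by ring
  -- choose T
  set n : ℕ := ⌈B⌉₊ with hndef
  have hn2 : 2 ≤ n := by
    have : 1 < n := Nat.lt_ceil.mpr (by exact_mod_cast hB1)
    omega
  set T : ℕ := n - 1 with hTdef
  have hTcast : (T : ℝ) = (n : ℝ) - 1 := by
    rw [hTdef, Nat.cast_sub (by omega)]; norm_num
  have hTB : (T : ℝ) < B := by
    have := Nat.ceil_lt_add_one (le_of_lt (lt_trans one_pos hB1))
    rw [hTcast]; linarith [this]
  have hBT : B - 1 ≤ (T : ℝ) := by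
    have := Nat.le_ceil B
    rw [hTcast]; linarith [this]
  -- the target event is contained in S' = E T ∩ {β ≤ X T}
  set S' : Set Ω := E T ∩ {ω | β ≤ X T ω} with hS'def
  have hsub : {ω : Ω | ∀ t : ℕ, (t : ℝ) < (1 / γ) * (1 + Real.log (x₀ / β)) → β < X t ω}
      ⊆ S' := by
    intro ω hω
    have hall : ∀ s : ℕ, s ≤ T → β < X s ω := by
      intro s hs
      refine hω s ?_
      calc (s : ℝ) ≤ (T : ℝ) := by exact_mod_cast hs
        _ < B := hTB
    exact ⟨fun s hs => le_of_lt (hall s (le_of_lt hs)), le_of_lt (hall T le_rfl)⟩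
  -- Markov step
  have hMarkov : β * (P S').toReal ≤ ∫ ω in S', X T ω ∂P := by
    have hc : ∫ _ω in S', β ∂P = (P S').toReal * β := by
      rw [setIntegral_const]; simp [smul_eq_mul, Measure.real]
    have := setIntegral_mono_on (integrableOn_const (measure_ne_top P S'))
      (hint T).integrableOn (ℱ.le T _ (hES T)) (fun ω hω => hω.2)
    rw [hc] at this; linarith [this]
  have hS'E : ∫ ω in S', X T ω ∂P ≤ ∫ ω in E T, X T ω ∂P := by
    refine setIntegral_mono_set (hint T).integrableOn ?_
      (Set.inter_subset_left).eventuallyLE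
    exact Filter.Eventually.of_forall (fun ω => hnonneg T ω)
  -- numeric bound : (1-γ)^T * x₀ ≤ β / 2
  have hxL : x₀ = β * Real.exp L := by
    rw [hLdef, Real.exp_log (div_pos hx0 hβ)]
    field_simp
  have hnum : (1 - γ) ^ T * x₀ ≤ β / 2 := by
    set m : ℕ := T - 1 with hmdef
    have hTm : T = m + 1 := by omega
    have hmcast : (m : ℝ) = (T : ℝ) - 1 := by
      rw [hmdef, Nat.cast_sub (by omega)]; norm_num
    have hexp1 : 1 - γ ≤ Real.exp (-γ) := by
      have := Real.add_one_le_exp (-γ); linarith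
    have hp : (1 - γ) ^ m ≤ Real.exp (-γ) ^ m := pow_le_pow_left₀ h1γ hexp1 m
    have hp2 : Real.exp (-γ) ^ m = Real.exp ((m : ℝ) * (-γ)) := by
      rw [← Real.exp_nat_mul]
    have hmB : B - 2 ≤ (m : ℝ) := by rw [hmcast]; linarith
    have hγB : γ * B = 1 + L := by
      rw [hBdef]; field_simp
    have hp3 : (m : ℝ) * (-γ) ≤ 2 * γ - 1 - L := by nlinarith
    have hp4 : (1 - γ) ^ m ≤ Real.exp (2 * γ - 1 - L) := by
      calc (1 - γ) ^ m ≤ Real.exp ((m : ℝ) * (-γ)) := by rw [← hp2]; exact hp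
        _ ≤ Real.exp (2 * γ - 1 - L) := Real.exp_le_exp.mpr hp3
    have hkey : (1 - γ) * Real.exp (2 * γ - 1) ≤ 1 / 2 := by
      have h1 := Real.add_one_le_exp (1 - 2 * γ)
      have h2 : Real.exp (1 - 2 * γ) * Real.exp (2 * γ - 1) = 1 := by
        rw [← Real.exp_add]; norm_num
      nlinarith [Real.exp_pos (2 * γ - 1), Real.exp_pos (1 - 2 * γ)]
    have hEL : Real.exp (2 * γ - 1 - L) * Real.exp L = Real.exp (2 * γ - 1) := by
      rw [← Real.exp_add]; ring_nf
    calc (1 - γ) ^ T * x₀ = (1 - γ) ^ m * (1 - γ) * (β * Real.exp L) := by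
          rw [hTm, hxL, pow_succ]
      _ ≤ Real.exp (2 * γ - 1 - L) * (1 - γ) * (β * Real.exp L) := by
          have hb : 0 ≤ (1 - γ) * (β * Real.exp L) :=
            mul_nonneg h1γ (mul_nonneg (le_of_lt hβ) (le_of_lt (Real.exp_pos L)))
          rw [mul_assoc, mul_assoc]
          exact mul_le_mul_of_nonneg_right hp4 hb
      _ = β * ((1 - γ) * Real.exp (2 * γ - 1)) := by
          rw [← hEL]; ring
      _ ≤ β * (1 / 2) := mul_le_mul_of_nonneg_left hkey (le_of_lt hβ)
      _ = β / 2 := by ring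
  -- combine
  have htoReal : (P S').toReal ≤ 1 / 2 := by
    have h := le_trans hMarkov (le_trans hS'E (le_trans (key T) hnum))
    have h' : β * (P S').toReal ≤ β * (1 / 2) := by linarith
    exact (mul_le_mul_iff_right₀ hβ).mp h'
  calc P {ω : Ω | ∀ t : ℕ, (t : ℝ) < (1 / γ) * (1 + Real.log (x₀ / β)) → β < X t ω}
      ≤ P S' := measure_mono hsub
    _ = ENNReal.ofReal ((P S').toReal) := (ENNReal.ofReal_toReal (measure_ne_top P S')).symm
    _ ≤ ENNReal.ofReal (1 / 2) := ENNReal.ofReal_le_ofReal htoReal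
    _ ≤ 1 / 2 := by
        rw [ENNReal.ofReal_div_of_pos (by norm_num)]
        norm_num
end

section
/- Let x > T ≥ 0 be integers, let α ∈ (0,1), let C ≥ 1 and let n ≥ 2 be an integer. Let Z be a binomially distributed random variable with parameters x and p = α·(x−T)/x (so E[Z] = α(x−T)). Then P( Z ≥ (x−T) + C·ln(n) ) ≤ n^{−C·(1−α)/6}. -/
open MeasureTheory

/-- Tail bound for the number of migrating users on one resource (Lemma 7 of the paper):
if `Z ~ Bin(x, α(x−T)/x)`, then `P(Z ≥ (x−T) + C·ln n) ≤ n^{−C(1−α)/6}`.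
The binomial distribution of `Z` is specified by its probability mass function. -/
theorem excess_walk_tail (x T : ℕ) (hT : T < x)
    (α : ℝ) (hα0 : 0 < α) (hα1 : α < 1)
    (C : ℝ) (hC : 1 ≤ C)
    (n : ℕ) (hn : 2 ≤ n)
    {Ω : Type*} [MeasurableSpace Ω] (P : Measure Ω) [IsProbabilityMeasure P]
    (Z : Ω → ℕ) (hZmeas : Measurable Z)
    (hZ : ∀ z : ℕ, P {ω | Z ω = z} =
      ENNReal.ofReal ((x.choose z : ℝ) * (α * ((x : ℝ) - T) / x) ^ z *
        (1 - α * ((x : ℝ) - T) / x) ^ (x - z))) :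
    P {ω | ((x : ℝ) - T) + C * Real.log n ≤ (Z ω : ℝ)} ≤
      ENNReal.ofReal ((n : ℝ) ^ (-(C * (1 - α) / 6))) := by
  have hx : 0 < x := lt_of_le_of_lt (Nat.zero_le T) hT
  have hx0 : (0:ℝ) < x := by exact_mod_cast hx
  have hTx : (T:ℝ) < x := by exact_mod_cast hT
  have hxT : (0:ℝ) < (x:ℝ) - T := by linarith
  set p : ℝ := α * ((x:ℝ) - T) / x with hp_def
  have hp0 : 0 < p := div_pos (mul_pos hα0 hxT) hx0
  have hp1 : p < 1 := by
    have h1 : ((x:ℝ)-T)/x ≤ 1 := div_le_one_of_le₀ (by linarith) hx0.le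
    have heq : p = α * (((x:ℝ)-T)/x) := by rw [hp_def]; ring
    nlinarith
  have hn1 : (1:ℝ) < n := by exact_mod_cast lt_of_lt_of_le one_lt_two hn
  have hln : 0 < Real.log n := Real.log_pos hn1
  set a : ℝ := ((x:ℝ) - T) + C * Real.log n with ha_def
  set L : ℝ := -Real.log α with hL_def
  have hL : 0 < L := neg_pos.mpr (Real.log_neg hα0 hα1)
  have hexpL : Real.exp L = α⁻¹ := by
    rw [hL_def, Real.exp_neg, Real.exp_log hα0]
  set g : ℕ → ℝ := fun z =>
    (x.choose z : ℝ) * p ^ z * (1 - p) ^ (x - z) * Real.exp (L * z - L * a) with hg_def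
  have hg_nonneg : ∀ z, 0 ≤ g z := by
    intro z
    have : (0:ℝ) ≤ 1 - p := by linarith
    positivity
  -- Step 1: union bound
  have cover : {ω | a ≤ (Z ω:ℝ)} ⊆ ⋃ z : ℕ, {ω | Z ω = z ∧ a ≤ (z:ℝ)} := by
    intro ω hω
    exact Set.mem_iUnion.mpr ⟨Z ω, rfl, hω⟩
  have step1 : P {ω | a ≤ (Z ω:ℝ)} ≤ ∑' z : ℕ, P {ω | Z ω = z ∧ a ≤ (z:ℝ)} :=
    (measure_mono cover).trans (measure_iUnion_le _)
  -- Step 2: termwise bound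
  have step2 : ∀ z : ℕ, P {ω | Z ω = z ∧ a ≤ (z:ℝ)} ≤ ENNReal.ofReal (g z) := by
    intro z
    by_cases h : a ≤ (z:ℝ)
    · have hset : {ω | Z ω = z ∧ a ≤ (z:ℝ)} = {ω | Z ω = z} := by
        ext ω; simp [h]
      rw [hset, hZ z]
      apply ENNReal.ofReal_le_ofReal
      have h1 : (1:ℝ) ≤ Real.exp (L * z - L * a) := by
        apply Real.one_le_exp
        nlinarith
      have hpmf : (0:ℝ) ≤ (x.choose z : ℝ) * p ^ z * (1 - p) ^ (x - z) := by
        have : (0:ℝ) ≤ 1 - p := by linarith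
        positivity
      calc (x.choose z : ℝ) * p ^ z * (1 - p) ^ (x - z)
          = (x.choose z : ℝ) * p ^ z * (1 - p) ^ (x - z) * 1 := by ring
        _ ≤ g z := mul_le_mul_of_nonneg_left h1 hpmf
    · have hset : {ω | Z ω = z ∧ a ≤ (z:ℝ)} = (∅ : Set Ω) := by
        ext ω; simp [h]
      rw [hset, measure_empty]
      exact zero_le
  have step12 : P {ω | a ≤ (Z ω:ℝ)} ≤ ∑' z : ℕ, ENNReal.ofReal (g z) :=
    step1.trans (ENNReal.tsum_le_tsum step2)
  -- Step 3: the tsum is a finite sum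
  have hout : ∀ z ∉ Finset.range (x+1), ENNReal.ofReal (g z) = 0 := by
    intro z hz
    have hzx : x < z := by simpa [Nat.lt_succ_iff, not_le] using hz
    have : g z = 0 := by
      rw [hg_def]
      simp [Nat.choose_eq_zero_of_lt hzx]
    rw [this, ENNReal.ofReal_zero]
  have step3 : ∑' z : ℕ, ENNReal.ofReal (g z)
      = ENNReal.ofReal (∑ z ∈ Finset.range (x+1), g z) := by
    rw [tsum_eq_sum hout, ENNReal.ofReal_sum_of_nonneg (fun z _ => hg_nonneg z)]
  -- Step 4: compute the finite sum via binomial theorem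
  have hsum : ∑ z ∈ Finset.range (x+1), g z
      = Real.exp (-(L*a)) * (p * Real.exp L + (1 - p))^x := by
    rw [add_pow, Finset.mul_sum]
    apply Finset.sum_congr rfl
    intro z hz
    have hsplit : Real.exp (L * z - L * a) = (Real.exp L)^z * Real.exp (-(L*a)) := by
      rw [← Real.exp_nat_mul, ← Real.exp_add]
      ring_nf
    rw [hg_def]
    simp only [hsplit, mul_pow]
    ring
  -- Step 5: bound the base
  set u : ℝ := ((x:ℝ)-T)*(1-α)/x with hu_def
  have hu0 : 0 ≤ u := div_nonneg (mul_nonneg hxT.le (by linarith)) hx0.le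
  have hbase : p * Real.exp L + (1 - p) = 1 + u := by
    rw [hexpL, hp_def, hu_def]
    field_simp
    ring
  have hpow : (1+u)^x ≤ Real.exp (((x:ℝ)-T)*(1-α)) := by
    have hxu : (x:ℝ) * u = ((x:ℝ)-T)*(1-α) := by
      rw [hu_def]; field_simp
    calc (1+u)^x ≤ (Real.exp u)^x := by
          apply pow_le_pow_left₀ (by linarith)
          linarith [Real.add_one_le_exp u]
      _ = Real.exp ((x:ℝ) * u) := by rw [← Real.exp_nat_mul]
      _ = Real.exp (((x:ℝ)-T)*(1-α)) := by rw [hxu]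
  -- Step 6: final exponent arithmetic
  have key : ((x:ℝ)-T)*(1-α) - L*a ≤ (-(C * (1 - α) / 6)) * Real.log n := by
    have hlog : Real.log α ≤ α - 1 := Real.log_le_sub_one_of_pos hα0
    have h1 : ((x:ℝ)-T) * (1 - α + Real.log α) ≤ 0 :=
      mul_nonpos_of_nonneg_of_nonpos hxT.le (by linarith)
    have h2 : Real.log α * Real.log n ≤ (α - 1) * Real.log n :=
      mul_le_mul_of_nonneg_right hlog hln.le
    have h3 : C * (Real.log α * Real.log n) ≤ C * ((α - 1) * Real.log n) :=
      mul_le_mul_of_nonneg_left h2 (by linarith)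
    have h4 : 0 ≤ C * (1-α) * Real.log n :=
      mul_nonneg (mul_nonneg (by linarith) (by linarith)) hln.le
    rw [hL_def, ha_def]
    nlinarith
  have hrpow : Real.exp ((-(C * (1 - α) / 6)) * Real.log n)
      = (n:ℝ) ^ (-(C * (1 - α) / 6)) := by
    rw [Real.rpow_def_of_pos (by linarith : (0:ℝ) < n), mul_comm]
  -- Combine
  have final : ∑ z ∈ Finset.range (x+1), g z ≤ (n:ℝ) ^ (-(C * (1 - α) / 6)) := by
    rw [hsum, hbase]
    calc Real.exp (-(L*a)) * (1+u)^x
        ≤ Real.exp (-(L*a)) * Real.exp (((x:ℝ)-T)*(1-α)) := by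
          apply mul_le_mul_of_nonneg_left hpow (Real.exp_nonneg _)
      _ = Real.exp (((x:ℝ)-T)*(1-α) - L*a) := by rw [← Real.exp_add]; ring_nf
      _ ≤ Real.exp ((-(C * (1 - α) / 6)) * Real.log n) := Real.exp_le_exp.mpr key
      _ = (n:ℝ) ^ (-(C * (1 - α) / 6)) := hrpow
  calc P {ω | a ≤ (Z ω:ℝ)} ≤ ∑' z : ℕ, ENNReal.ofReal (g z) := step12
    _ = ENNReal.ofReal (∑ z ∈ Finset.range (x+1), g z) := step3
    _ ≤ ENNReal.ofReal ((n:ℝ) ^ (-(C * (1 - α) / 6))) := ENNReal.ofReal_le_ofReal final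
end

section
/- Let n ≥ 8 be an even integer and let G = (V,E) be the graph on vertex set V = V₁ ∪ V₂ with |V₁| = |V₂| = n/2, in which V₁ and V₂ each induce a complete graph (clique) and there are exactly k cross edges between V₁ and V₂ for some integer k with 1 ≤ k ≤ n²/5, distributed evenly: every vertex is incident to at least ⌊k/(n/2)⌋ and at most ⌈k/(n/2)⌉ cross edges. Let u ∈ V₁ be a vertex with exactly ⌊k/(n/2)⌋ cross neighbors, and for an integer t ≥ 1 define the probability that a simple random walk started at u stays within V₁ for t steps as the sum, over all sequences (w₀, w₁, …, w_t) with w₀ = u, each w_i ∈ V₁, and {w_i, w_{i+1}} ∈ E for all i < t, of the products ∏_{i=0}^{t−1} 1/deg(w_i). Then this probability is at least 4^{−24kt/n² − 1/2}. -/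
open Finset

noncomputable def trajSum {V : Type*} [Fintype V] [DecidableEq V]
    (G : SimpleGraph V) [DecidableRel G.Adj] (V₁ : Finset V) (d : V → ℝ) (t : ℕ) (v : V) : ℝ :=
  ∑ w : Fin (t + 1) → V,
    (if w 0 = v ∧ (∀ i : Fin (t + 1), w i ∈ V₁) ∧
        (∀ i : Fin t, G.Adj (w i.castSucc) (w i.succ))
      then ∏ i : Fin t, d (w i.castSucc)
      else 0)

lemma trajSum_zero {V : Type*} [Fintype V] [DecidableEq V]
    (G : SimpleGraph V) [DecidableRel G.Adj] (V₁ : Finset V) (d : V → ℝ)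
    (v : V) (hv : v ∈ V₁) :
    trajSum G V₁ d 0 v = 1 := by
  unfold trajSum
  rw [← (Equiv.funUnique (Fin 1) V).symm.sum_comp]
  have hrw : ∀ x : V, (∑ _i : Fin 0, (0:ℝ)) = 0 := fun _ => rfl
  calc (∑ x : V,
      if ((Equiv.funUnique (Fin 1) V).symm x) 0 = v ∧
          (∀ i : Fin (0+1), ((Equiv.funUnique (Fin 1) V).symm x) i ∈ V₁) ∧
          (∀ i : Fin 0, G.Adj (((Equiv.funUnique (Fin 1) V).symm x) i.castSucc)
            (((Equiv.funUnique (Fin 1) V).symm x) i.succ))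
        then ∏ i : Fin 0, d (((Equiv.funUnique (Fin 1) V).symm x) i.castSucc)
        else 0)
      = ∑ x : V, if x = v then (1:ℝ) else 0 := by
        refine Finset.sum_congr rfl (fun x _ => ?_)
        rw [Fin.prod_univ_zero]
        refine if_congr ?_ rfl rfl
        constructor
        · rintro ⟨h, -, -⟩; exact h
        · rintro rfl; exact ⟨rfl, fun _ => hv, fun i => i.elim0⟩
    _ = 1 := by rw [Finset.sum_ite_eq' Finset.univ v (fun _ => (1:ℝ))]; simp

lemma trajSum_nonneg {V : Type*} [Fintype V] [DecidableEq V]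
    (G : SimpleGraph V) [DecidableRel G.Adj] (V₁ : Finset V) (d : V → ℝ)
    (hd : ∀ v, 0 ≤ d v) (t : ℕ) (v : V) :
    0 ≤ trajSum G V₁ d t v := by
  apply Finset.sum_nonneg
  intro w _
  split
  · exact Finset.prod_nonneg (fun i _ => hd _)
  · exact le_refl 0

lemma trajSum_rec {V : Type*} [Fintype V] [DecidableEq V]
    (G : SimpleGraph V) [DecidableRel G.Adj] (V₁ : Finset V) (d : V → ℝ)
    (hd : ∀ v, 0 ≤ d v)
    (hclique1 : ∀ u ∈ V₁, ∀ v ∈ V₁, (G.Adj u v ↔ u ≠ v))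
    (t : ℕ) (v : V) (hv : v ∈ V₁) :
    d v * ∑ z ∈ V₁.erase v, trajSum G V₁ d t z ≤ trajSum G V₁ d (t + 1) v := by
  have hR : trajSum G V₁ d (t+1) v =
      ∑ a : V, ∑ g : Fin (t+1) → V,
        (if (Fin.cons a g : Fin (t+1+1) → V) 0 = v ∧
            (∀ i : Fin (t+1+1), (Fin.cons a g : Fin (t+1+1) → V) i ∈ V₁) ∧
            (∀ i : Fin (t+1), G.Adj ((Fin.cons a g : Fin (t+1+1) → V) i.castSucc)
              ((Fin.cons a g : Fin (t+1+1) → V) i.succ))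
          then ∏ i : Fin (t+1), d ((Fin.cons a g : Fin (t+1+1) → V) i.castSucc)
          else 0) := by
    unfold trajSum
    rw [← Fintype.sum_equiv (Fin.consEquiv (fun _ : Fin (t+1+1) => V)) _ _ (fun p => rfl)]
    rw [Fintype.sum_prod_type]
    simp [Fin.consEquiv]
  have key : ∀ g : Fin (t+1) → V,
      (if (Fin.cons v g : Fin (t+1+1) → V) 0 = v ∧
          (∀ i : Fin (t+1+1), (Fin.cons v g : Fin (t+1+1) → V) i ∈ V₁) ∧
          (∀ i : Fin (t+1), G.Adj ((Fin.cons v g : Fin (t+1+1) → V) i.castSucc)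
            ((Fin.cons v g : Fin (t+1+1) → V) i.succ))
        then ∏ i : Fin (t+1), d ((Fin.cons v g : Fin (t+1+1) → V) i.castSucc)
        else 0)
      = d v *
        (if g 0 ∈ V₁.erase v ∧ (∀ i : Fin (t+1), g i ∈ V₁) ∧
            (∀ i : Fin t, G.Adj (g i.castSucc) (g i.succ))
          then ∏ i : Fin t, d (g i.castSucc)
          else 0) := by
    intro g
    have hC : ((Fin.cons v g : Fin (t+1+1) → V) 0 = v ∧
          (∀ i : Fin (t+1+1), (Fin.cons v g : Fin (t+1+1) → V) i ∈ V₁) ∧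
          (∀ i : Fin (t+1), G.Adj ((Fin.cons v g : Fin (t+1+1) → V) i.castSucc)
            ((Fin.cons v g : Fin (t+1+1) → V) i.succ)))
        ↔ (g 0 ∈ V₁.erase v ∧ (∀ i : Fin (t+1), g i ∈ V₁) ∧
            (∀ i : Fin t, G.Adj (g i.castSucc) (g i.succ))) := by
      constructor
      · rintro ⟨-, hall, hadj⟩
        have hg : ∀ i : Fin (t+1), g i ∈ V₁ := fun i => by
          have := hall i.succ; rwa [Fin.cons_succ] at this
        have hadj' : ∀ i : Fin t, G.Adj (g i.castSucc) (g i.succ) := fun i => by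
          have := hadj i.succ
          rwa [← Fin.succ_castSucc, Fin.cons_succ, Fin.cons_succ] at this
        have hadj0 := hadj 0
        rw [Fin.castSucc_zero, Fin.cons_zero, Fin.cons_succ] at hadj0
        refine ⟨Finset.mem_erase.2 ⟨?_, hg 0⟩, hg, hadj'⟩
        exact fun h => ((hclique1 v hv (g 0) (hg 0)).1 hadj0) h.symm
      · rintro ⟨h0, hg, hadj⟩
        obtain ⟨hne, hg0⟩ := Finset.mem_erase.1 h0
        refine ⟨Fin.cons_zero _ _, ?_, ?_⟩
        · intro i
          refine Fin.cases ?_ (fun j => ?_) i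
          · rw [Fin.cons_zero]; exact hv
          · rw [Fin.cons_succ]; exact hg j
        · intro i
          refine Fin.cases ?_ (fun j => ?_) i
          · rw [Fin.castSucc_zero, Fin.cons_zero, Fin.cons_succ]
            exact (hclique1 v hv (g 0) hg0).2 (Ne.symm hne)
          · rw [← Fin.succ_castSucc, Fin.cons_succ, Fin.cons_succ]
            exact hadj j
    have hP : (∏ i : Fin (t+1), d ((Fin.cons v g : Fin (t+1+1) → V) i.castSucc))
        = d v * ∏ i : Fin t, d (g i.castSucc) := by
      rw [Fin.prod_univ_succ]
      simp only [Fin.castSucc_zero, Fin.cons_zero, ← Fin.succ_castSucc, Fin.cons_succ]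
    rw [mul_ite, mul_zero, hP, if_congr hC rfl rfl]
  have hS : ∑ z ∈ V₁.erase v, trajSum G V₁ d t z =
      ∑ g : Fin (t+1) → V,
        (if g 0 ∈ V₁.erase v ∧ (∀ i : Fin (t+1), g i ∈ V₁) ∧
            (∀ i : Fin t, G.Adj (g i.castSucc) (g i.succ))
          then ∏ i : Fin t, d (g i.castSucc)
          else 0) := by
    unfold trajSum
    rw [Finset.sum_comm]
    refine Finset.sum_congr rfl (fun g _ => ?_)
    rw [ite_and, ← Finset.sum_ite_eq (V₁.erase v) (g 0)
      (fun _ => if ((∀ i : Fin (t+1), g i ∈ V₁) ∧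
        (∀ i : Fin t, G.Adj (g i.castSucc) (g i.succ)))
        then ∏ i : Fin t, d (g i.castSucc) else 0)]
    refine Finset.sum_congr rfl (fun z _ => ?_)
    rw [ite_and]
  rw [hR, hS, Finset.mul_sum]
  calc ∑ g : Fin (t+1) → V, d v *
        (if g 0 ∈ V₁.erase v ∧ (∀ i : Fin (t+1), g i ∈ V₁) ∧
            (∀ i : Fin t, G.Adj (g i.castSucc) (g i.succ))
          then ∏ i : Fin t, d (g i.castSucc)
          else 0)
      = ∑ g : Fin (t+1) → V,
        (if (Fin.cons v g : Fin (t+1+1) → V) 0 = v ∧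
            (∀ i : Fin (t+1+1), (Fin.cons v g : Fin (t+1+1) → V) i ∈ V₁) ∧
            (∀ i : Fin (t+1), G.Adj ((Fin.cons v g : Fin (t+1+1) → V) i.castSucc)
              ((Fin.cons v g : Fin (t+1+1) → V) i.succ))
          then ∏ i : Fin (t+1), d ((Fin.cons v g : Fin (t+1+1) → V) i.castSucc)
          else 0) := Finset.sum_congr rfl (fun g _ => (key g).symm)
    _ ≤ _ := by
        apply Finset.single_le_sum (f := fun a : V => ∑ g : Fin (t+1) → V,
          (if (Fin.cons a g : Fin (t+1+1) → V) 0 = v ∧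
              (∀ i : Fin (t+1+1), (Fin.cons a g : Fin (t+1+1) → V) i ∈ V₁) ∧
              (∀ i : Fin (t+1), G.Adj ((Fin.cons a g : Fin (t+1+1) → V) i.castSucc)
                ((Fin.cons a g : Fin (t+1+1) → V) i.succ))
            then ∏ i : Fin (t+1), d ((Fin.cons a g : Fin (t+1+1) → V) i.castSucc)
            else 0))
          (fun a _ => Finset.sum_nonneg (fun g _ => by
            split
            · exact Finset.prod_nonneg (fun i _ => hd _)
            · exact le_refl 0))
          (Finset.mem_univ v)

lemma trajSum_ge {V : Type*} [Fintype V] [DecidableEq V]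
    (G : SimpleGraph V) [DecidableRel G.Adj] (V₁ : Finset V) (d : V → ℝ)
    (hd : ∀ v, 0 ≤ d v)
    (hclique1 : ∀ u ∈ V₁, ∀ v ∈ V₁, (G.Adj u v ↔ u ≠ v))
    (ρ : ℝ) (hρ0 : 0 ≤ ρ)
    (hρ : ρ * ((V₁.card : ℝ) - 1) = (∑ z ∈ V₁, ((V₁.card : ℝ) - 1) * d z) - 1)
    (hle1 : ∀ v ∈ V₁, ((V₁.card : ℝ) - 1) * d v ≤ 1) :
    ∀ t : ℕ, ∀ v ∈ V₁, ((V₁.card : ℝ) - 1) * d v * ρ ^ t ≤ trajSum G V₁ d t v := by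
  intro t
  induction t with
  | zero =>
    intro v hv
    rw [trajSum_zero G V₁ d v hv, pow_zero, mul_one]
    exact hle1 v hv
  | succ t ih =>
    intro v hv
    have h1 := trajSum_rec G V₁ d hd hclique1 t v hv
    have h2 : ∑ z ∈ V₁.erase v, (((V₁.card:ℝ)-1) * d z * ρ^t)
        ≤ ∑ z ∈ V₁.erase v, trajSum G V₁ d t z :=
      Finset.sum_le_sum (fun z hz => ih z (Finset.mem_of_mem_erase hz))
    have h3 : ∑ z ∈ V₁.erase v, (((V₁.card:ℝ)-1) * d z * ρ^t)
        = ((∑ z ∈ V₁, ((V₁.card:ℝ)-1) * d z) - ((V₁.card:ℝ)-1) * d v) * ρ^t := by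
      rw [← Finset.sum_mul, Finset.sum_erase_eq_sub hv]
    have h4 : ρ * ((V₁.card:ℝ)-1) * ρ^t
        ≤ ((∑ z ∈ V₁, ((V₁.card:ℝ)-1) * d z) - ((V₁.card:ℝ)-1) * d v) * ρ^t := by
      apply mul_le_mul_of_nonneg_right _ (pow_nonneg hρ0 t)
      rw [hρ]; linarith [hle1 v hv]
    calc ((V₁.card:ℝ)-1) * d v * ρ^(t+1)
        = d v * (ρ * ((V₁.card:ℝ)-1) * ρ^t) := by ring
      _ ≤ d v * (((∑ z ∈ V₁, ((V₁.card:ℝ)-1)*d z) - ((V₁.card:ℝ)-1)*d v) * ρ^t) :=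
          mul_le_mul_of_nonneg_left h4 (hd v)
      _ = d v * ∑ z ∈ V₁.erase v, (((V₁.card:ℝ)-1) * d z * ρ^t) := by rw [h3]
      _ ≤ d v * ∑ z ∈ V₁.erase v, trajSum G V₁ d t z :=
          mul_le_mul_of_nonneg_left h2 (hd v)
      _ ≤ trajSum G V₁ d (t+1) v := h1

set_option maxHeartbeats 2000000 in
/-- Confinement estimate underlying Theorem 4 of the paper: in the graph made of two
cliques `V₁, V₂` of size `n/2` each, joined by `k` evenly-distributed cross edges
(`1 ≤ k ≤ n²/5`), a random walk started at a vertex `u ∈ V₁` with `⌊k/(n/2)⌋` cross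
neighbors stays inside `V₁` for `t` steps with probability at least
`4^(−24kt/n² − 1/2)`. The probability of staying in `V₁` is written as the sum over
all trajectories `(w₀, …, w_t)` inside `V₁` starting at `u` of the product of the
one-step probabilities `1/deg(w_i)`. -/
theorem two_clique_confinement {V : Type*} [Fintype V] [DecidableEq V]
    (n : ℕ) (hn8 : 8 ≤ n) (hneven : Even n) (hcard : Fintype.card V = n)
    (V₁ V₂ : Finset V)
    (hunion : V₁ ∪ V₂ = Finset.univ) (hdisj : Disjoint V₁ V₂)
    (hcard1 : V₁.card = n / 2) (hcard2 : V₂.card = n / 2)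
    (G : SimpleGraph V) [DecidableRel G.Adj]
    (hclique1 : ∀ u ∈ V₁, ∀ v ∈ V₁, (G.Adj u v ↔ u ≠ v))
    (hclique2 : ∀ u ∈ V₂, ∀ v ∈ V₂, (G.Adj u v ↔ u ≠ v))
    (k : ℕ) (hk1 : 1 ≤ k) (hk2 : 5 * k ≤ n ^ 2)
    (hkcount : ∑ v ∈ V₁, ((G.neighborFinset v) ∩ V₂).card = k)
    (heven1 : ∀ v ∈ V₁, k / (n / 2) ≤ ((G.neighborFinset v) ∩ V₂).card ∧
      ((G.neighborFinset v) ∩ V₂).card ≤ (k + n / 2 - 1) / (n / 2))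
    (heven2 : ∀ v ∈ V₂, k / (n / 2) ≤ ((G.neighborFinset v) ∩ V₁).card ∧
      ((G.neighborFinset v) ∩ V₁).card ≤ (k + n / 2 - 1) / (n / 2))
    (u : V) (hu : u ∈ V₁)
    (hucross : ((G.neighborFinset u) ∩ V₂).card = k / (n / 2))
    (t : ℕ) (ht : 1 ≤ t) :
    (4 : ℝ) ^ (-(24 * (k : ℝ) * (t : ℝ) / (n : ℝ) ^ 2) - 1 / 2) ≤
      ∑ w : Fin (t + 1) → V,
        (if w 0 = u ∧ (∀ i : Fin (t + 1), w i ∈ V₁) ∧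
            (∀ i : Fin t, G.Adj (w i.castSucc) (w i.succ))
          then ∏ i : Fin t, ((G.degree (w i.castSucc) : ℝ))⁻¹
          else 0) := by
  -- basic numerology
  set m : ℕ := n / 2 with hmdef
  have hn2 : n = 2 * m := by
    obtain ⟨r, hr⟩ := hneven; omega
  have hm4 : 4 ≤ m := by omega
  set c : V → ℕ := fun v => ((G.neighborFinset v) ∩ V₂).card with hcdef
  set f : ℕ := k / m with hfdef
  -- degree computation
  have hdeg : ∀ v ∈ V₁, G.degree v = (m - 1) + c v := by
    intro v hv
    have hsplit : G.neighborFinset v =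
        (G.neighborFinset v ∩ V₁) ∪ (G.neighborFinset v ∩ V₂) := by
      rw [← Finset.inter_union_distrib_left, hunion, Finset.inter_univ]
    have hNV1 : G.neighborFinset v ∩ V₁ = V₁.erase v := by
      ext w
      simp only [Finset.mem_inter, SimpleGraph.mem_neighborFinset, Finset.mem_erase]
      constructor
      · rintro ⟨hadj, hw⟩
        exact ⟨hadj.ne', hw⟩
      · rintro ⟨hne, hw⟩
        exact ⟨(hclique1 v hv w hw).2 (Ne.symm hne), hw⟩
    have hdisj2 : Disjoint (G.neighborFinset v ∩ V₁) (G.neighborFinset v ∩ V₂) :=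
      Disjoint.mono Finset.inter_subset_right Finset.inter_subset_right hdisj
    rw [SimpleGraph.degree, hsplit, Finset.card_union_of_disjoint hdisj2, hNV1,
      Finset.card_erase_of_mem hv, hcard1]
  -- nat division facts
  have hm0 : 0 < m := by omega
  have hdm : m * f + k % m = k := by rw [hfdef]; exact Nat.div_add_mod k m
  have hmod := Nat.mod_lt k hm0
  have hmf1 : m * f ≤ k := by omega
  have hmf2 : k < m * f + m := by omega
  have hksq : 5 * k ≤ 4 * m ^ 2 := by
    have h : n ^ 2 = 4 * m ^ 2 := by rw [hn2]; ring
    rw [h] at hk2; exact hk2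
  have hkm2 : k < m * m := by nlinarith
  have hf_le : f ≤ m - 1 := by
    have : f < m := Nat.div_lt_iff_lt_mul hm0 |>.2 hkm2
    omega
  have hfc : ∀ v ∈ V₁, f ≤ c v := fun v hv => (heven1 v hv).1
  have hcu : c u = f := hucross
  clear_value f c m
  -- real versions
  obtain ⟨M, hMdef⟩ : ∃ y : ℝ, y = (m : ℝ) - 1 := ⟨_, rfl⟩
  have hmR : (4:ℝ) ≤ (m:ℝ) := by exact_mod_cast hm4
  have hM3 : (3:ℝ) ≤ M := by rw [hMdef]; linarith
  have hMpos : (0:ℝ) < M := by linarith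
  have hdegR : ∀ v ∈ V₁, (G.degree v : ℝ) = M + (c v : ℝ) := by
    intro v hv
    rw [hdeg v hv, Nat.cast_add, Nat.cast_sub (by omega : 1 ≤ m), Nat.cast_one, ← hMdef]
  obtain ⟨d, hddef⟩ : ∃ dd : V → ℝ, dd = fun v => ((G.degree v : ℝ))⁻¹ := ⟨_, rfl⟩
  have hdval : ∀ v, d v = ((G.degree v : ℝ))⁻¹ := fun v => by rw [hddef]
  have hd0 : ∀ v, 0 ≤ d v := fun v => by rw [hdval]; positivity
  have hdegpos : ∀ v ∈ V₁, (0:ℝ) < (G.degree v : ℝ) := by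
    intro v hv
    rw [hdegR v hv]
    have : (0:ℝ) ≤ (c v : ℝ) := Nat.cast_nonneg _
    linarith
  have hcard1R : ((V₁.card : ℝ) - 1) = M := by
    rw [hcard1, hMdef]
  have hle1 : ∀ v ∈ V₁, M * d v ≤ 1 := by
    intro v hv
    rw [hdval, ← div_eq_mul_inv, div_le_one (hdegpos v hv), hdegR v hv]
    have : (0:ℝ) ≤ (c v : ℝ) := Nat.cast_nonneg _
    linarith
  -- lower bound for H
  have hMf : (0:ℝ) < M + (f:ℝ) := by
    have : (0:ℝ) ≤ (f:ℝ) := Nat.cast_nonneg _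
    linarith
  have hterm : ∀ v ∈ V₁, 1 - (c v : ℝ)/(M + f) ≤ M * d v := by
    intro v hv
    have hc0 : (0:ℝ) ≤ (c v : ℝ) := Nat.cast_nonneg _
    have hfcv : (f:ℝ) ≤ (c v : ℝ) := by exact_mod_cast hfc v hv
    have hMc : (0:ℝ) < M + (c v : ℝ) := by linarith
    have e1 : M * d v = 1 - (c v : ℝ)/(M + c v) := by
      rw [hdval, hdegR v hv, ← div_eq_mul_inv]
      field_simp
      ring
    rw [e1]
    have h2 : (c v : ℝ)/(M + c v) ≤ (c v : ℝ)/(M + f) := by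
      gcongr
    linarith
  have hH0 : (m:ℝ) - (k:ℝ)/(M + f) ≤ ∑ z ∈ V₁, M * d z := by
    have h1 : ∑ z ∈ V₁, (1 - (c z : ℝ)/(M + f)) ≤ ∑ z ∈ V₁, M * d z :=
      Finset.sum_le_sum hterm
    have h2 : ∑ z ∈ V₁, (1 - (c z : ℝ)/(M + f))
        = (V₁.card : ℝ) - (k:ℝ)/(M + f) := by
      rw [Finset.sum_sub_distrib, Finset.sum_const, nsmul_eq_mul, mul_one,
        ← Finset.sum_div]
      congr 2
      rw [← Nat.cast_sum]
      exact_mod_cast congrArg (Nat.cast : ℕ → ℝ) hkcount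
    rw [h2, hcard1] at h1
    exact h1
  obtain ⟨H, hHdef⟩ : ∃ y : ℝ, y = ∑ z ∈ V₁, M * d z := ⟨_, rfl⟩
  have hH : (m:ℝ) - (k:ℝ)/(M + f) ≤ H := by rw [hHdef]; exact hH0
  obtain ⟨ρ, hρdef⟩ : ∃ y : ℝ, y = (H - 1) / M := ⟨_, rfl⟩
  have hρM : ρ * ((V₁.card : ℝ) - 1) = H - 1 := by
    rw [hcard1R, hρdef, div_mul_cancel₀]
    exact ne_of_gt hMpos
  have hρ_lb : 1 - (k:ℝ)/(M*(M + f)) ≤ ρ := by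
    rw [hρdef, le_div_iff₀ hMpos]
    have hk0 : (0:ℝ) ≤ (k:ℝ) := Nat.cast_nonneg _
    have expand : (1 - (k:ℝ)/(M*(M + f))) * M = M - (k:ℝ)/(M+f) := by
      field_simp
    rw [expand]
    have hmM : (m:ℝ) = M + 1 := by rw [hMdef]; ring
    linarith [hH]
  -- the key inequality
  have hfR : (0:ℝ) ≤ (f:ℝ) := Nat.cast_nonneg _
  have hkR : (1:ℝ) ≤ (k:ℝ) := by exact_mod_cast hk1
  have hmf1R : (k:ℝ) ≤ (m:ℝ)*(f:ℝ) + (m:ℝ) - 1 := by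
    have h : k + 1 ≤ m*f + m := hmf2
    have h2 : ((k:ℝ) + 1) ≤ (m:ℝ)*(f:ℝ) + (m:ℝ) := by exact_mod_cast h
    linarith
  have hksqR : 5*(k:ℝ) ≤ 4*(m:ℝ)^2 := by exact_mod_cast hksq
  have e1 : M^2 + (k:ℝ) ≤ (m:ℝ)*(M+(f:ℝ)) := by
    rw [hMdef]; nlinarith
  have e2 : 5*(m:ℝ)^3 + 32*(m:ℝ)^2 ≤ 40*M^3 := by
    rw [hMdef]
    have h4 : (0:ℝ) ≤ (m:ℝ) - 4 := by linarith
    nlinarith [mul_nonneg (mul_nonneg h4 h4) h4, sq_nonneg ((m:ℝ) - 4),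
      mul_nonneg h4 (by linarith : (0:ℝ) ≤ (m:ℝ))]
  have e3 : (m:ℝ)*((m:ℝ)^2 + 8*(k:ℝ)) ≤ 8*M*(M^2 + (k:ℝ)) := by
    rw [hMdef] at e2 ⊢
    nlinarith [e2, hksqR]
  have hkey : (m:ℝ)^2 + 8*(k:ℝ) ≤ 8*M*(M + (f:ℝ)) := by
    have h1 : (m:ℝ) * ((m:ℝ)^2 + 8*(k:ℝ)) ≤ (m:ℝ) * (8*M*(M + (f:ℝ))) := by
      calc (m:ℝ) * ((m:ℝ)^2 + 8*(k:ℝ)) ≤ 8*M*(M^2 + (k:ℝ)) := e3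
        _ ≤ 8*M*((m:ℝ)*(M+(f:ℝ))) := by
            apply mul_le_mul_of_nonneg_left e1
            positivity
        _ = (m:ℝ) * (8*M*(M + (f:ℝ))) := by ring
    have hm0R : (0:ℝ) < (m:ℝ) := by linarith
    exact le_of_mul_le_mul_left h1 hm0R
  have hD : (0:ℝ) < M*(M + (f:ℝ)) := by positivity
  have hρ0_lb : (0:ℝ) < 1 - (k:ℝ)/(M*(M + f)) := by
    have hmm2 : (0:ℝ) < (m:ℝ)^2 := by positivity
    have hlt : (k:ℝ) < M*(M+(f:ℝ)) := by nlinarith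
    have := (div_lt_one hD).2 hlt
    linarith
  -- rpow bound
  obtain ⟨x, hxdef⟩ : ∃ y : ℝ, y = 24*(k:ℝ)/(n:ℝ)^2 := ⟨_, rfl⟩
  have hnR : (n:ℝ) = 2*(m:ℝ) := by exact_mod_cast hn2
  have hx0 : (0:ℝ) ≤ x := by
    rw [hxdef]; positivity
  have hxval : x = 6*(k:ℝ)/(m:ℝ)^2 := by
    rw [hxdef, hnR]; ring
  have hlog4 : (4:ℝ)/3 ≤ Real.log 4 := by
    have h2 : Real.log 4 = 2 * Real.log 2 := by
      rw [show (4:ℝ) = 2^(2:ℕ) by norm_num, Real.log_pow]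
      push_cast; ring
    have := Real.log_two_gt_d9
    rw [h2]; linarith
  have h4x : 1 + (4/3)*x ≤ (4:ℝ)^x := by
    rw [Real.rpow_def_of_pos (by norm_num : (0:ℝ) < 4)]
    have h1 : 1 + Real.log 4 * x ≤ Real.exp (Real.log 4 * x) := by
      have := Real.add_one_le_exp (Real.log 4 * x)
      linarith
    have h2 : (4/3)*x ≤ Real.log 4 * x := mul_le_mul_of_nonneg_right hlog4 hx0
    linarith
  have hq_pos : (0:ℝ) < (4:ℝ)^(-x) := Real.rpow_pos_of_pos (by norm_num) _
  have hq_le : (4:ℝ)^(-x) ≤ ρ := by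
    have h13x : (0:ℝ) < 1 + (4/3)*x := by linarith
    have hqq : (4:ℝ)^(-x) ≤ (1 + (4/3)*x)⁻¹ := by
      rw [Real.rpow_neg (by norm_num : (0:ℝ) ≤ 4)]
      exact inv_anti₀ h13x h4x
    have hmmpos : (0:ℝ) < (m:ℝ)^2 := by positivity
    have h134 : 1 + (4/3)*x = ((m:ℝ)^2 + 8*(k:ℝ))/(m:ℝ)^2 := by
      rw [hxval]; field_simp; ring
    have hinv : (1 + (4/3)*x)⁻¹ ≤ 1 - (k:ℝ)/(M*(M + f)) := by
      rw [h134, inv_div]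
      rw [div_le_iff₀ (by positivity : (0:ℝ) < (m:ℝ)^2 + 8*(k:ℝ))]
      have expand : (1 - (k:ℝ)/(M*(M + (f:ℝ)))) * ((m:ℝ)^2 + 8*(k:ℝ))
          = ((M*(M+(f:ℝ)) - k) * ((m:ℝ)^2 + 8*(k:ℝ))) / (M*(M+(f:ℝ))) := by
        field_simp
      rw [expand, le_div_iff₀ hD]
      nlinarith [hkey, hkR, hD, mul_nonneg (le_trans zero_le_one hkR) (sub_nonneg.2 hkey)]
    linarith [hρ_lb]
  have hρ0 : (0:ℝ) ≤ ρ := le_of_lt (lt_of_lt_of_le hq_pos hq_le)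
  -- half bound at u
  have hhu : (1:ℝ)/2 ≤ M * d u := by
    have hdegu : (G.degree u : ℝ) = M + (f:ℝ) := by
      rw [hdegR u hu, hcu]
    have hfM : (f:ℝ) ≤ M := by
      have h1 : (f:ℕ) ≤ m - 1 := hf_le
      have h2 : ((f:ℕ):ℝ) ≤ ((m-1 : ℕ):ℝ) := by exact_mod_cast h1
      rw [Nat.cast_sub (by omega : 1 ≤ m)] at h2
      rw [hMdef]
      simpa using h2
    rw [hdval, hdegu, ← div_eq_mul_inv, le_div_iff₀ hMf]
    linarith
  -- apply the walk bound
  have hρ_lemma : ρ * ((V₁.card:ℝ)-1) = (∑ z ∈ V₁, ((V₁.card:ℝ)-1) * d z) - 1 := by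
    rw [hcard1R, hρdef, div_mul_cancel₀ _ (ne_of_gt hMpos), hHdef]
  have hle1' : ∀ v ∈ V₁, ((V₁.card:ℝ)-1) * d v ≤ 1 := fun v hv => by
    rw [hcard1R]; exact hle1 v hv
  have hmain := trajSum_ge G V₁ d hd0 hclique1 ρ hρ0 hρ_lemma hle1' t u hu
  rw [hcard1R] at hmain
  have hhalf : (4:ℝ)^(-(1/2) : ℝ) = 1/2 := by
    rw [show (4:ℝ) = 2^(2:ℕ) by norm_num, ← Real.rpow_natCast 2 2,
      ← Real.rpow_mul (by norm_num : (0:ℝ) ≤ 2)]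
    rw [show ((2:ℕ):ℝ) * -(1/2) = (-1 : ℝ) by push_cast; ring, Real.rpow_neg_one]
    norm_num
  have hpowt : ((4:ℝ)^(-x))^t = (4:ℝ)^((-x)*(t:ℝ)) := by
    rw [← Real.rpow_natCast ((4:ℝ)^(-x)) t, ← Real.rpow_mul (by norm_num : (0:ℝ) ≤ 4)]
  have hLHS : (4:ℝ) ^ (-(24 * (k:ℝ) * (t:ℝ) / (n:ℝ)^2) - 1/2) = (1/2) * ((4:ℝ)^(-x))^t := by
    rw [hpowt,
      show (-(24 * (k:ℝ) * (t:ℝ) / (n:ℝ)^2) - 1/2 : ℝ) = (-x)*(t:ℝ) + (-(1/2)) by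
        rw [hxdef]; ring,
      Real.rpow_add (by norm_num : (0:ℝ) < 4), hhalf]
    ring
  calc (4:ℝ) ^ (-(24 * (k:ℝ) * (t:ℝ) / (n:ℝ)^2) - 1/2)
      = (1/2) * ((4:ℝ)^(-x))^t := hLHS
    _ ≤ (M * d u) * ρ^t := by
        apply mul_le_mul hhu (pow_le_pow_left₀ (le_of_lt hq_pos) hq_le t)
          (by positivity) (mul_nonneg (le_of_lt hMpos) (hd0 u))
    _ ≤ trajSum G V₁ d t u := hmain
    _ = _ := by simp only [trajSum, hddef]
end
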